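/- arXiv:2006.04804 — 6 statements merged into one kernel-verified Lean document; each statement's English description precedes it below -/
import Mathlib

section
/- (Theorem 1(ii): the aggregation kernel is not universal.) Fix n ≥ 2, d ≥ 1, let σ(t) = 1/(1 + exp(−t)) be the sigmoid, and define the aggregation kernel agg(X,Y) = ⟪Σ_i X i, Σ_j Y j⟫ on tuples X, Y : Fin n → EuclideanSpace ℝ (Fin d). Then there exist a compact, permutation-invariant set K of tuples, a continuous permutation-invariant function f : K → ℝ, and ε > 0, such that for every m ∈ ℕ, α : Fin m → ℝ, β : Fin m → ℝ, and Θ : Fin m → (Fin n → EuclideanSpace ℝ (Fin d)), there is some X ∈ K with |f(X) − Σ_j α j * σ(agg(X, Θ j) + β j)| ≥ ε. (Indeed, any function of this form takes equal values on two tuples whose coordinate sums Σ_i X i agree, while for n ≥ 2 there exist tuples with equal coordinate sums that are not permutations of each other.) -/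
open scoped RealInnerProductSpace BigOperators

noncomputable section

def sigmoid (t : ℝ) : ℝ := 1 / (1 + Real.exp (-t))

def Coupling (n m : ℕ) : Set (Matrix (Fin n) (Fin m) ℝ) :=
  {T | (∀ i j, 0 ≤ T i j) ∧ (∀ i, ∑ j, T i j = 1 / (n : ℝ)) ∧
       (∀ j, ∑ i, T i j = 1 / (m : ℝ))}

def WL2 {n m d : ℕ} (X : Fin n → EuclideanSpace ℝ (Fin d))
    (Y : Fin m → EuclideanSpace ℝ (Fin d)) : ℝ :=
  sInf ((fun T : Matrix (Fin n) (Fin m) ℝ =>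
    ∑ i, ∑ j, T i j * ‖X i - Y j‖ ^ 2) '' Coupling n m)

def Wdot {n m d : ℕ} (X : Fin n → EuclideanSpace ℝ (Fin d))
    (Y : Fin m → EuclideanSpace ℝ (Fin d)) : ℝ :=
  sSup ((fun T : Matrix (Fin n) (Fin m) ℝ =>
    ∑ i, ∑ j, T i j * ⟪X i, Y j⟫) '' Coupling n m)

def agg {n d : ℕ} (X Y : Fin n → EuclideanSpace ℝ (Fin d)) : ℝ :=
  ⟪∑ i, X i, ∑ j, Y j⟫

theorem stmt_4 {n d : ℕ} (hn : 2 ≤ n) (hd : 1 ≤ d) :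
    ∃ (K : Set (Fin n → EuclideanSpace ℝ (Fin d)))
      (f : (Fin n → EuclideanSpace ℝ (Fin d)) → ℝ) (ε : ℝ),
      IsCompact K ∧
      (∀ X ∈ K, ∀ π : Equiv.Perm (Fin n), (X ∘ π) ∈ K) ∧
      ContinuousOn f K ∧
      (∀ X ∈ K, ∀ π : Equiv.Perm (Fin n), f (X ∘ π) = f X) ∧
      0 < ε ∧
      ∀ (m : ℕ) (α β : Fin m → ℝ) (Θ : Fin m → (Fin n → EuclideanSpace ℝ (Fin d))),
        ∃ X ∈ K, ε ≤ |f X - ∑ j, α j * sigmoid (agg X (Θ j) + β j)| := by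
  classical
  set E := EuclideanSpace ℝ (Fin d)
  refine ⟨Metric.closedBall 0 1, fun X => ∑ i, ‖X i‖ ^ 2, 1, ?_, ?_, ?_, ?_, one_pos, ?_⟩
  · exact isCompact_closedBall 0 1
  · intro X hX π
    rw [Metric.mem_closedBall, dist_zero_right] at hX ⊢
    rw [pi_norm_le_iff_of_nonneg zero_le_one]
    exact fun i => le_trans (norm_le_pi_norm X (π i)) hX
  · apply Continuous.continuousOn
    exact continuous_finset_sum _ fun i _ => ((continuous_apply i).norm.pow 2)
  · intro X _ π
    exact Equiv.sum_comp π fun i => ‖X i‖ ^ 2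
  · intro m α β Θ
    set i0 : Fin n := ⟨0, lt_of_lt_of_le two_pos hn⟩
    set i1 : Fin n := ⟨1, lt_of_lt_of_le one_lt_two hn⟩
    have hne : i0 ≠ i1 := by simp [i0, i1, Fin.ext_iff]
    set v : E := EuclideanSpace.single ⟨0, hd⟩ (1 : ℝ)
    have hv : ‖v‖ = 1 := by
      rw [show v = EuclideanSpace.single ⟨0, hd⟩ (1 : ℝ) from rfl,
        EuclideanSpace.norm_single]
      norm_num
    set X0 : Fin n → E := 0
    set X1 : Fin n → E := Pi.single i0 v + Pi.single i1 (-v)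
    have hX0 : X0 ∈ Metric.closedBall (0 : Fin n → E) 1 := by
      simp [X0]
    have hX1 : X1 ∈ Metric.closedBall (0 : Fin n → E) 1 := by
      rw [Metric.mem_closedBall, dist_zero_right,
        pi_norm_le_iff_of_nonneg zero_le_one]
      intro i
      rcases eq_or_ne i i0 with rfl | h0
      · rw [show X1 i0 = v by simp [X1, Pi.single_eq_of_ne hne], hv]
      · rcases eq_or_ne i i1 with rfl | h1
        · rw [show X1 i1 = -v by simp [X1, Pi.single_eq_of_ne hne.symm], norm_neg, hv]
        · simp [X1, Pi.single_eq_of_ne h0, Pi.single_eq_of_ne h1]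
    have hsum1 : ∑ i, X1 i = 0 := by
      simp [X1, Finset.sum_add_distrib, Finset.sum_pi_single]
    have hfX0 : ∑ i, ‖X0 i‖ ^ 2 = 0 := by simp [X0]
    have hfX1 : ∑ i, ‖X1 i‖ ^ 2 = 2 := by
      have : ∀ i, ‖X1 i‖ ^ 2 =
          (if i = i0 then (1 : ℝ) else 0) + (if i = i1 then (1 : ℝ) else 0) := by
        intro i
        rcases eq_or_ne i i0 with rfl | h0
        · simp [X1, Pi.single_eq_same, Pi.single_eq_of_ne hne.symm, hv, hne]
        · rcases eq_or_ne i i1 with rfl | h1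
          · simp [X1, Pi.single_eq_same, Pi.single_eq_of_ne hne, hv, h0]
          · simp [X1, Pi.single_eq_of_ne h0, Pi.single_eq_of_ne h1, h0, h1]
      rw [Finset.sum_congr rfl fun i _ => this i, Finset.sum_add_distrib]
      simp
      norm_num
    have hagg : ∀ j, agg X1 (Θ j) = agg X0 (Θ j) := by
      intro j
      simp [agg, hsum1, X0]
    set g : ℝ := ∑ j, α j * sigmoid (agg X0 (Θ j) + β j)
    have hg1 : ∑ j, α j * sigmoid (agg X1 (Θ j) + β j) = g := by
      simp only [g]
      exact Finset.sum_congr rfl fun j _ => by rw [hagg j]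
    by_cases h : 1 ≤ |g|
    · refine ⟨X0, hX0, ?_⟩
      simpa [hfX0, abs_sub_comm] using h
    · refine ⟨X1, hX1, ?_⟩
      rw [show ((fun X => ∑ i, ‖X i‖ ^ 2) X1 : ℝ) = 2 from hfX1, hg1]
      push_neg at h
      have := abs_sub_abs_le_abs_sub (2 : ℝ) g
      calc (1 : ℝ) ≤ |(2 : ℝ)| - |g| := by rw [abs_two]; linarith
        _ ≤ |2 - g| := this
end
end

section
/- (Discriminatory implies universal.) Fix n, d ≥ 1, let σ(t) = 1/(1 + exp(−t)), let K be a compact subset of the tuple space (Fin n → EuclideanSpace ℝ (Fin d)), and let k be a real-valued kernel on pairs of tuples such that x ↦ k(Y, x) is continuous on K for every tuple Y. Suppose σ is discriminatory with respect to k on K, i.e.: for every finite signed regular Borel measure μ on K, if ∫_K σ(k(Y, x) + θ) dμ(x) = 0 for all tuples Y and all θ ∈ ℝ, then μ = 0. Then the set of functions of the form x ↦ Σ_{j=1}^m α_j σ(k(Q_j, x) + β_j) (with m ∈ ℕ, α_j, β_j ∈ ℝ, Q_j tuples) is dense, for the sup norm, in the space C(K, ℝ) of continuous real-valued functions on K.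 -/
open scoped RealInnerProductSpace BigOperators

noncomputable section

set_option linter.unusedSectionVars false
set_option linter.unusedVariables false

namespace RMKaux
open MeasureTheory TopologicalSpace Set
open scoped ENNReal NNReal


variable {X : Type*} [MetricSpace X] [CompactSpace X]

/-- admissible test functions for a set -/
def Adm (C : Set X) : Set C(X, ℝ) := {f | (∀ x ∈ C, 1 ≤ f x) ∧ ∀ x, 0 ≤ f x}

theorem nonneg_of_pointwise {f : C(X, ℝ)} (h : ∀ x, 0 ≤ f x) : (0 : C(X, ℝ)) ≤ f := by
  rw [ContinuousMap.le_def]; simpa using h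

variable (Λ : C(X, ℝ) →ₗ[ℝ] ℝ)

theorem lmono (hΛ : ∀ g : C(X, ℝ), (0:C(X,ℝ)) ≤ g → 0 ≤ Λ g)
    {g h : C(X, ℝ)} (hgh : ∀ x, g x ≤ h x) : Λ g ≤ Λ h := by
  have := hΛ (h - g) (nonneg_of_pointwise (by intro x; simp [sub_nonneg, hgh x]))
  rw [map_sub] at this; linarith

/-- the Riesz content as a real number -/
def rc (C : Set X) : ℝ := sInf (Λ '' Adm C)

theorem adm_one (C : Set X) : (1 : C(X, ℝ)) ∈ Adm C :=
  ⟨fun x _ => by norm_num, fun x => by norm_num⟩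

theorem rc_nonempty (C : Set X) : (Λ '' Adm C).Nonempty := ⟨Λ 1, 1, adm_one C, rfl⟩

variable (hΛ : ∀ g : C(X, ℝ), (0:C(X,ℝ)) ≤ g → 0 ≤ Λ g)
include hΛ

theorem rc_bddBelow (C : Set X) : BddBelow (Λ '' Adm C) := by
  refine ⟨0, ?_⟩
  rintro y ⟨f, hf, rfl⟩
  exact hΛ f (nonneg_of_pointwise hf.2)

theorem rc_nonneg (C : Set X) : 0 ≤ rc Λ C :=
  le_csInf (rc_nonempty Λ C) (by rintro y ⟨f, hf, rfl⟩; exact hΛ f (nonneg_of_pointwise hf.2))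

theorem rc_le {C : Set X} {f : C(X, ℝ)} (hf : f ∈ Adm C) : rc Λ C ≤ Λ f :=
  csInf_le (rc_bddBelow Λ hΛ C) ⟨f, hf, rfl⟩

theorem rc_mono {C₁ C₂ : Set X} (h : C₁ ⊆ C₂) : rc Λ C₁ ≤ rc Λ C₂ := by
  apply le_csInf (rc_nonempty Λ C₂)
  rintro y ⟨f, hf, rfl⟩
  exact rc_le Λ hΛ ⟨fun x hx => hf.1 x (h hx), hf.2⟩

theorem rc_exists {C : Set X} {ε : ℝ} (hε : 0 < ε) :
    ∃ f ∈ Adm C, Λ f < rc Λ C + ε := by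
  obtain ⟨y, ⟨f, hf, rfl⟩, hy⟩ := exists_lt_of_csInf_lt (rc_nonempty Λ C)
    (lt_add_of_pos_right _ hε)
  exact ⟨f, hf, hy⟩

theorem rc_sup_le (C₁ C₂ : Set X) : rc Λ (C₁ ∪ C₂) ≤ rc Λ C₁ + rc Λ C₂ := by
  refine le_of_forall_pos_le_add fun ε hε => ?_
  obtain ⟨f₁, hf₁, h₁⟩ := rc_exists Λ hΛ (C := C₁) (half_pos hε)
  obtain ⟨f₂, hf₂, h₂⟩ := rc_exists Λ hΛ (C := C₂) (half_pos hε)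
  have hadm : f₁ + f₂ ∈ Adm (C₁ ∪ C₂) := by
    constructor
    · rintro x (hx | hx) <;> simp only [ContinuousMap.add_apply]
      · have := hf₂.2 x; have := hf₁.1 x hx; linarith
      · have := hf₁.2 x; have := hf₂.1 x hx; linarith
    · intro x
      simp only [ContinuousMap.add_apply]
      have := hf₁.2 x; have := hf₂.2 x; linarith
  have hle := rc_le Λ hΛ hadm
  rw [map_add] at hle
  linarith

theorem rc_sup_disjoint (C₁ C₂ : Set X) (hd : Disjoint C₁ C₂)
    (h₁ : IsClosed C₁) (h₂ : IsClosed C₂) :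
    rc Λ C₁ + rc Λ C₂ ≤ rc Λ (C₁ ∪ C₂) := by
  apply le_csInf (rc_nonempty Λ _)
  rintro y ⟨f, hf, rfl⟩
  obtain ⟨φ, hφ0, hφ1, hφmem⟩ := exists_continuous_zero_one_of_isClosed h₁ h₂ hd
  have key1 : f * (1 - φ) ∈ Adm C₁ := by
    constructor
    · intro x hx
      have h0 : φ x = 0 := hφ0 hx
      simp only [ContinuousMap.mul_apply, ContinuousMap.sub_apply, ContinuousMap.one_apply, h0]
      simpa using hf.1 x (Or.inl hx)
    · intro x
      have h01 := hφmem x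
      have h0f := hf.2 x
      simp only [ContinuousMap.mul_apply, ContinuousMap.sub_apply, ContinuousMap.one_apply]
      nlinarith [h01.1, h01.2]
  have key2 : f * φ ∈ Adm C₂ := by
    constructor
    · intro x hx
      have h1' : φ x = 1 := hφ1 hx
      simp only [ContinuousMap.mul_apply, h1', mul_one]
      exact hf.1 x (Or.inr hx)
    · intro x
      have h01 := hφmem x
      have h0f := hf.2 x
      simp only [ContinuousMap.mul_apply]
      nlinarith [h01.1, h01.2]
  have hsum : f * (1 - φ) + f * φ = f := by ring
  have hle1 := rc_le Λ hΛ key1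
  have hle2 := rc_le Λ hΛ key2
  have hΛsum : Λ (f * (1 - φ)) + Λ (f * φ) = Λ f := by rw [← map_add, hsum]
  linarith

theorem rc_univ : rc Λ (univ : Set X) = Λ 1 := by
  refine le_antisymm (rc_le Λ hΛ (adm_one univ)) (le_csInf (rc_nonempty Λ _) ?_)
  rintro y ⟨f, hf, rfl⟩
  exact lmono Λ hΛ (fun x => by simpa using hf.1 x (mem_univ x))

/-- the Riesz content, bundled -/
def rieszContent : Content X where
  toFun := fun C => Real.toNNReal (rc Λ C)
  mono' := fun C₁ C₂ h => Real.toNNReal_mono (rc_mono Λ hΛ h)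
  sup_disjoint' := by
    intro C₁ C₂ hd h₁ h₂
    have h := le_antisymm (rc_sup_le Λ hΛ (C₁ : Set X) C₂) (rc_sup_disjoint Λ hΛ _ _ hd h₁ h₂)
    show (rc Λ ((C₁ ⊔ C₂ : Compacts X) : Set X)).toNNReal
        = (rc Λ (C₁ : Set X)).toNNReal + (rc Λ (C₂ : Set X)).toNNReal
    have hco : ((C₁ ⊔ C₂ : Compacts X) : Set X) = (C₁ : Set X) ∪ C₂ := rfl
    rw [hco, h, Real.toNNReal_add (rc_nonneg Λ hΛ _) (rc_nonneg Λ hΛ _)]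
  sup_le' := by
    intro C₁ C₂
    show (rc Λ ((C₁ ⊔ C₂ : Compacts X) : Set X)).toNNReal
        ≤ (rc Λ (C₁ : Set X)).toNNReal + (rc Λ (C₂ : Set X)).toNNReal
    have hco : ((C₁ ⊔ C₂ : Compacts X) : Set X) = (C₁ : Set X) ∪ C₂ := rfl
    calc Real.toNNReal (rc Λ ((C₁ ⊔ C₂ : Compacts X) : Set X))
        ≤ Real.toNNReal (rc Λ (C₁ : Set X) + rc Λ (C₂ : Set X)) := by
          rw [hco]; exact Real.toNNReal_mono (rc_sup_le Λ hΛ _ _)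
      _ = _ := Real.toNNReal_add (rc_nonneg Λ hΛ _) (rc_nonneg Λ hΛ _)

theorem rieszContent_regular : (rieszContent Λ hΛ).ContentRegular := by
  intro C
  refine le_antisymm (le_iInf₂ fun C' hC' => ?_) ?_
  · exact (rieszContent Λ hΛ).mono _ _ (hC'.trans interior_subset)
  · refine ENNReal.le_of_forall_pos_le_add fun ε hε _ => ?_
    -- choose a test function
    have hεR : (0:ℝ) < (ε:ℝ) := by exact_mod_cast hε
    set εR : ℝ := (ε:ℝ) with hεRdef
    set a := rc Λ (C : Set X) with ha
    have ha0 : 0 ≤ a := rc_nonneg Λ hΛ _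
    -- pick δ and ε₁
    set δ : ℝ := min (1/2) (εR / (2 * (a + εR))) with hδ
    have hapos : 0 < a + εR := by positivity
    have hδpos : 0 < δ := by
      apply lt_min (by norm_num)
      positivity
    have hδle : δ ≤ 1/2 := min_le_left _ _
    have h1δ : 0 < 1 - δ := by linarith
    obtain ⟨f, hf, hfΛ⟩ := rc_exists Λ hΛ (C := (C : Set X)) (show (0:ℝ) < εR/4 by linarith)
    set U : Set X := {x | 1 - δ < f x} with hU
    have hUopen : IsOpen U := isOpen_lt continuous_const f.continuous
    have hCU : (C : Set X) ⊆ U := fun x hx => by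
      have := hf.1 x hx; simp only [hU, mem_setOf_eq]; linarith
    set C' : Compacts X := ⟨closure U, isClosed_closure.isCompact⟩ with hC'
    have hsub : (C : Set X) ⊆ interior (C' : Set X) :=
      hCU.trans (subset_interior_iff.2 ⟨U, hUopen, subset_rfl, subset_closure⟩)
    have hadm : (1 - δ)⁻¹ • f ∈ Adm (C' : Set X) := by
      constructor
      · intro x hx
        have hcl : 1 - δ ≤ f x := by
          have hclosed : IsClosed {y | 1 - δ ≤ f y} := isClosed_le continuous_const f.continuous
          have hUsub : closure U ⊆ {y | 1 - δ ≤ f y} :=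
            closure_minimal (fun y hy => show 1 - δ ≤ f y from le_of_lt hy) hclosed
          exact hUsub hx
        simp only [ContinuousMap.smul_apply, smul_eq_mul]
        rw [← sub_nonneg] at hcl
        rw [le_inv_mul_iff₀ h1δ]
        linarith
      · intro x
        have := hf.2 x
        simp only [ContinuousMap.smul_apply, smul_eq_mul]
        positivity
    have hrc' : rc Λ (C' : Set X) ≤ (1 - δ)⁻¹ * Λ f := by
      have := rc_le Λ hΛ hadm
      rwa [_root_.map_smul, smul_eq_mul] at this
    -- arithmetic: (1-δ)⁻¹ * (a + εR/4) ≤ a + εR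
    have harith : (1 - δ)⁻¹ * (a + εR/4) ≤ a + εR := by
      rw [inv_mul_le_iff₀ h1δ]
      have hδ2 : δ ≤ εR / (2 * (a + εR)) := min_le_right _ _
      have hkey : δ * (a + εR) ≤ εR / 2 := by
        have h2 : εR / (2 * (a + εR)) * (a + εR) = εR / 2 := by
          field_simp
        have := mul_le_mul_of_nonneg_right hδ2 (le_of_lt hapos)
        linarith
      nlinarith
    have hfin : rc Λ (C' : Set X) ≤ a + εR := by
      refine hrc'.trans (le_trans ?_ harith)
      have : (0:ℝ) ≤ (1 - δ)⁻¹ := le_of_lt (inv_pos.2 h1δ)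
      nlinarith [le_of_lt hfΛ]
    refine le_trans (iInf₂_le C' hsub) ?_
    show ((Real.toNNReal (rc Λ (C' : Set X)) : ℝ≥0) : ℝ≥0∞) ≤ ((Real.toNNReal a : ℝ≥0) : ℝ≥0∞) + ↑ε
    rw [← ENNReal.coe_add, ENNReal.coe_le_coe]
    calc Real.toNNReal (rc Λ (C' : Set X)) ≤ Real.toNNReal (a + εR) :=
          Real.toNNReal_mono hfin
      _ = Real.toNNReal a + Real.toNNReal εR :=
          Real.toNNReal_add ha0 (le_of_lt hεR)
      _ = Real.toNNReal a + ε := by rw [hεRdef, Real.toNNReal_coe]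


section Measure

variable [MeasurableSpace X] [BorelSpace X]

/-- the Riesz measure -/
def rieszMeasure : Measure X := (rieszContent Λ hΛ).measure

theorem rieszMeasure_compacts (C : Compacts X) :
    rieszMeasure Λ hΛ ↑C = rieszContent Λ hΛ C :=
  Content.measure_eq_content_of_regular _ (rieszContent_regular Λ hΛ) C

theorem rieszMeasure_compacts_toReal (C : Compacts X) :
    (rieszMeasure Λ hΛ ↑C).toReal = rc Λ (C : Set X) := by
  rw [rieszMeasure_compacts Λ hΛ C]
  show ((Real.toNNReal (rc Λ (C : Set X)) : ℝ≥0) : ℝ≥0∞).toReal = _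
  rw [ENNReal.coe_toReal, Real.coe_toNNReal _ (rc_nonneg Λ hΛ _)]

instance : IsFiniteMeasure (rieszMeasure Λ hΛ) := by
  constructor
  have : (univ : Set X) = ((⟨univ, isCompact_univ⟩ : Compacts X) : Set X) := rfl
  rw [this, rieszMeasure_compacts Λ hΛ]
  exact ENNReal.coe_lt_top

theorem rieszMeasure_univ_toReal : (rieszMeasure Λ hΛ univ).toReal = Λ 1 := by
  have : (univ : Set X) = ((⟨univ, isCompact_univ⟩ : Compacts X) : Set X) := rfl
  rw [this, rieszMeasure_compacts_toReal Λ hΛ]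
  exact rc_univ Λ hΛ

theorem lam_le_measure_open {U : Set X} (hU : IsOpen U) {f : C(X, ℝ)}
    (h0 : ∀ x, 0 ≤ f x) (h1 : ∀ x, f x ≤ 1) (hsupp : tsupport f ⊆ U) :
    Λ f ≤ (rieszMeasure Λ hΛ U).toReal := by
  have hC : IsCompact (tsupport f) := (isClosed_tsupport f).isCompact
  have step1 : Λ f ≤ rc Λ (tsupport f) := by
    apply le_csInf (rc_nonempty Λ _)
    rintro y ⟨g, hg, rfl⟩
    apply lmono Λ hΛ
    intro x
    by_cases hx : x ∈ tsupport f
    · exact (h1 x).trans (hg.1 x hx)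
    · rw [image_eq_zero_of_notMem_tsupport hx]
      exact hg.2 x
  have step2 : (rieszContent Λ hΛ ⟨tsupport f, hC⟩ : ℝ≥0∞) ≤ rieszMeasure Λ hΛ U := by
    rw [show rieszMeasure Λ hΛ U = (rieszContent Λ hΛ).outerMeasure U from
      Content.measure_apply _ hU.measurableSet]
    rw [show (rieszContent Λ hΛ).outerMeasure U
        = (rieszContent Λ hΛ).innerContent ⟨U, hU⟩ from
      Content.outerMeasure_opens _ ⟨U, hU⟩]
    exact Content.le_innerContent _ _ _ hsupp
  have step3 : rc Λ (tsupport f) ≤ (rieszMeasure Λ hΛ U).toReal := by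
    have := ENNReal.toReal_mono (measure_ne_top _ _) step2
    rwa [show ((rieszContent Λ hΛ ⟨tsupport f, hC⟩ : ℝ≥0∞)).toReal = rc Λ (tsupport f) by
      show ((Real.toNNReal (rc Λ (tsupport f)) : ℝ≥0) : ℝ≥0∞).toReal = _
      rw [ENNReal.coe_toReal, Real.coe_toNNReal _ (rc_nonneg Λ hΛ _)]] at this
  linarith

theorem measure_le_lam {C : Set X} (hC : IsCompact C) {f : C(X, ℝ)} (hf : f ∈ Adm C) :
    (rieszMeasure Λ hΛ C).toReal ≤ Λ f := by
  have : (rieszMeasure Λ hΛ C).toReal = rc Λ C := rieszMeasure_compacts_toReal Λ hΛ ⟨C, hC⟩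
  rw [this]
  exact rc_le Λ hΛ hf

end Measure

section Main

variable [MeasurableSpace X] [BorelSpace X]

set_option maxHeartbeats 2000000 in
theorem lam_le_integral_aux (g : C(X, ℝ)) {δ : ℝ} (hδ0 : 0 < δ) (hδ1 : δ ≤ 1) :
    Λ g ≤ (∫ x, g x ∂(rieszMeasure Λ hΛ)) +
      δ * (2 * (rieszMeasure Λ hΛ univ).toReal + 2 * ‖g‖ + 6) := by
  classical
  set μ : Measure X := rieszMeasure Λ hΛ with hμdef
  set T : ℝ := (μ univ).toReal with hT
  have hT0 : 0 ≤ T := ENNReal.toReal_nonneg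
  have hg0 : 0 ≤ ‖g‖ := norm_nonneg g
  have hgb : ∀ x, |g x| ≤ ‖g‖ := fun x => by
    simpa [Real.norm_eq_abs] using g.norm_coe_le_norm x
  set a : ℝ := -‖g‖ - 1 with ha
  set m : ℕ := ⌈(2*‖g‖+2)/δ⌉₊ with hm
  have hm1 : 1 ≤ m := Nat.ceil_pos.2 (by positivity)
  have hmR : (0:ℝ) < (m:ℝ) := by exact_mod_cast Nat.lt_of_lt_of_le Nat.zero_lt_one hm1
  have hmδ : 2*‖g‖+2 ≤ (m:ℝ)*δ := by
    have := Nat.le_ceil ((2*‖g‖+2)/δ)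
    rw [div_le_iff₀ hδ0] at this
    exact this
  have hmub : (m:ℝ)*δ ≤ 2*‖g‖+2+δ := by
    have := Nat.ceil_lt_add_one (show (0:ℝ) ≤ (2*‖g‖+2)/δ by positivity)
    have h2 : (m:ℝ) < (2*‖g‖+2)/δ + 1 := this
    have h3 : (m:ℝ) * δ < ((2*‖g‖+2)/δ + 1) * δ := by
      exact mul_lt_mul_of_pos_right h2 hδ0
    rw [add_mul, div_mul_cancel₀ _ (ne_of_gt hδ0), one_mul] at h3
    linarith
  -- the level sets
  set E : Fin m → Set X := fun i => ⇑g ⁻¹' (Ioc (a + (i:ℕ)*δ) (a + ((i:ℕ)+1)*δ)) with hE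
  have hEmeas : ∀ i, MeasurableSet (E i) := fun i =>
    g.continuous.measurable measurableSet_Ioc
  have hEdisj : Pairwise (Function.onFun Disjoint E) := by
    intro i j hij
    have : Disjoint (Ioc (a + (i:ℕ)*δ) (a + ((i:ℕ)+1)*δ)) (Ioc (a + (j:ℕ)*δ) (a + ((j:ℕ)+1)*δ)) := by
      rw [Set.Ioc_disjoint_Ioc]
      rcases lt_or_gt_of_ne (fun h => hij (Fin.ext (by exact_mod_cast h : (i:ℕ) = (j:ℕ)))) with h | h
      · have hc : ((i:ℕ):ℝ) + 1 ≤ ((j:ℕ):ℝ) := by exact_mod_cast h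
        have : a + ((i:ℕ)+1)*δ ≤ a + (j:ℕ)*δ := by nlinarith
        exact le_trans (min_le_left _ _) (this.trans (le_max_right _ _))
      · have hc : ((j:ℕ):ℝ) + 1 ≤ ((i:ℕ):ℝ) := by exact_mod_cast h
        have : a + ((j:ℕ)+1)*δ ≤ a + (i:ℕ)*δ := by nlinarith
        exact le_trans (min_le_right _ _) (this.trans (le_max_left _ _))
    exact this.preimage _
  have hEcover : ⋃ i, E i = univ := by
    apply eq_univ_of_forall
    intro x
    rw [mem_iUnion]
    have hgx := hgb x
    have ht0 : 0 < g x - a := by rw [ha]; cases' abs_le.mp hgx with h1 h2; linarith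
    set j : ℕ := ⌈(g x - a)/δ⌉₊ with hj
    have hj1 : 1 ≤ j := Nat.ceil_pos.2 (by positivity)
    have hjm : j ≤ m := by
      apply Nat.ceil_mono
      have hnum : g x - a ≤ 2*‖g‖+2 := by
        cases' abs_le.mp hgx with h1 h2; rw [ha]; linarith
      exact (div_le_div_iff_of_pos_right hδ0).mpr hnum
    refine ⟨⟨j - 1, by omega⟩, ?_⟩
    simp only [hE, mem_preimage, mem_Ioc]
    have hcast : ((((j:ℕ) - 1 : ℕ)):ℝ) = (j:ℝ) - 1 := by
      have : (1:ℕ) ≤ j := hj1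
      push_cast [Nat.cast_sub this]
      ring
    constructor
    · have : (j:ℝ) < (g x - a)/δ + 1 := Nat.ceil_lt_add_one (by positivity)
      have h4 : ((j:ℝ) - 1) * δ < g x - a := by
        rw [sub_mul, one_mul]
        have := mul_lt_mul_of_pos_right this hδ0
        rw [add_mul, div_mul_cancel₀ _ (ne_of_gt hδ0), one_mul] at this
        linarith
      show a + ((((j:ℕ) - 1 : ℕ)):ℝ) * δ < g x
      rw [hcast]
      linarith
    · have : (g x - a)/δ ≤ (j:ℝ) := Nat.le_ceil _
      rw [div_le_iff₀ hδ0] at this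
      show g x ≤ a + (((((j:ℕ) - 1 : ℕ)):ℝ) + 1) * δ
      rw [hcast]
      have h6 : a + ((j:ℝ) - 1 + 1) * δ = a + (j:ℝ)*δ := by ring
      rw [h6]
      linarith
  -- choose open approximations
  set εr : ℝ := δ / m with hεr
  have hεr0 : 0 < εr := by positivity
  have hV : ∀ i : Fin m, ∃ V, E i ⊆ V ∧ IsOpen V ∧ μ V ≤ μ (E i) + ENNReal.ofReal εr := by
    intro i
    obtain ⟨V, hVsub, hVopen, hVlt⟩ := Set.exists_isOpen_lt_add (E i) (measure_ne_top μ _)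
      (show ENNReal.ofReal εr ≠ 0 by simp [hεr0, ENNReal.ofReal_eq_zero, not_le])
    exact ⟨V, hVsub, hVopen, le_of_lt hVlt⟩
  choose V hVsub hVopen hVμ using hV
  set U : Fin m → Set X := fun i => V i ∩ {x | g x < a + ((i:ℕ)+2)*δ} with hU
  have hUopen : ∀ i, IsOpen (U i) := fun i =>
    (hVopen i).inter (isOpen_lt g.continuous continuous_const)
  have hEU : ∀ i, E i ⊆ U i := by
    intro i x hx
    simp only [hE, mem_preimage, mem_Ioc] at hx
    exact ⟨hVsub i hx, by simp only [mem_setOf_eq]; nlinarith [hx.2]⟩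
  have hUμ : ∀ i, (μ (U i)).toReal ≤ (μ (E i)).toReal + εr := by
    intro i
    have h1 : μ (U i) ≤ μ (E i) + ENNReal.ofReal εr :=
      le_trans (measure_mono inter_subset_left) (hVμ i)
    have h2 := ENNReal.toReal_mono
      (ENNReal.add_ne_top.mpr ⟨measure_ne_top _ _, ENNReal.ofReal_ne_top⟩) h1
    rwa [ENNReal.toReal_add (measure_ne_top _ _) ENNReal.ofReal_ne_top,
      ENNReal.toReal_ofReal (le_of_lt hεr0)] at h2
  have hUcover : (univ : Set X) ⊆ ⋃ i, U i := by
    rw [← hEcover]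
    exact iUnion_mono hEU
  -- partition of unity
  obtain ⟨h, hh⟩ := PartitionOfUnity.exists_isSubordinate (s := univ) isClosed_univ U hUopen hUcover
  have hsum1 : ∀ x, ∑ i, h i x = 1 := fun x => by
    rw [← finsum_eq_sum_of_fintype]
    exact h.sum_eq_one (mem_univ x)
  have hhone : (∑ i, h i) = (1 : C(X, ℝ)) := by
    ext x
    rw [ContinuousMap.coe_sum]
    simpa using hsum1 x
  have hgsum : g = ∑ i, (h i) * g := by
    ext x
    rw [ContinuousMap.coe_sum]
    simp only [Finset.sum_apply, ContinuousMap.mul_apply]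
    rw [← Finset.sum_mul, hsum1 x, one_mul]
  set c : Fin m → ℝ := fun i => a + ((i:ℕ)+2)*δ with hc
  set P : Fin m → ℝ := fun i => Λ (h i) with hP
  set q : Fin m → ℝ := fun i => (μ (E i)).toReal with hq
  have hq0 : ∀ i, 0 ≤ q i := fun i => ENNReal.toReal_nonneg
  have hP0 : ∀ i, 0 ≤ P i := fun i => hΛ _ (nonneg_of_pointwise (h.nonneg i))
  have hPU : ∀ i, P i ≤ q i + εr := by
    intro i
    refine le_trans ?_ (hUμ i)
    exact lam_le_measure_open Λ hΛ (hUopen i) (h.nonneg i) (h.le_one i) (hh i)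
  have hstep1 : ∀ i, Λ (h i * g) ≤ c i * P i := by
    intro i
    have hpt : ∀ x, (h i * g) x ≤ (c i • h i) x := by
      intro x
      simp only [ContinuousMap.mul_apply, ContinuousMap.smul_apply, smul_eq_mul]
      by_cases hx : h i x = 0
      · rw [hx]; simp
      · have hxs : x ∈ tsupport (h i) := subset_tsupport _ hx
        have hxU : x ∈ U i := hh i hxs
        have hgx : g x < c i := hxU.2
        have := h.nonneg i x
        nlinarith
    calc Λ (h i * g) ≤ Λ (c i • h i) := lmono Λ hΛ hpt
      _ = c i * P i := by rw [_root_.map_smul, smul_eq_mul]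
  have hsplit : Λ g = ∑ i, Λ (h i * g) := by
    conv_lhs => rw [hgsum]
    rw [map_sum]
  have hPsum : ∑ i, P i = T := by
    have : ∑ i, P i = Λ (∑ i, h i) := by rw [map_sum]
    rw [this, hhone]
    rw [hT, hμdef]
    exact (rieszMeasure_univ_toReal Λ hΛ).symm
  have hqsum : ∑ i, q i = T := by
    have hμsum : μ (univ : Set X) = ∑ i, μ (E i) := by
      rw [← hEcover, measure_iUnion hEdisj hEmeas, tsum_fintype]
    rw [hT, hμsum, ENNReal.toReal_sum (fun i _ => measure_ne_top _ _)]
  set M : ℝ := ‖g‖ + 1 with hM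
  have hcM : ∀ i, c i + M = ((i:ℕ)+2)*δ := by intro i; rw [hc, hM, ha]; ring
  have hcM0 : ∀ i, 0 ≤ c i + M := by
    intro i; rw [hcM i]; positivity
  have hcMub : ∀ i : Fin m, c i + M ≤ ((m:ℝ)+1)*δ := by
    intro i
    rw [hcM i]
    have : ((i:ℕ):ℝ) + 2 ≤ (m:ℝ) + 1 := by
      have := i.isLt
      have : ((i:ℕ):ℝ) ≤ (m:ℝ) - 1 := by
        have h2 : ((i:ℕ):ℝ) ≤ (m:ℝ) - 1 := by
          have := i.isLt
          have : ((i:ℕ):ℝ) + 1 ≤ (m:ℝ) := by exact_mod_cast i.isLt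
          linarith
        exact h2
      linarith
    nlinarith
  -- the per-term bound
  have hterm : ∀ i, c i * P i ≤ (c i + M)*(q i + εr) - M * P i := by
    intro i
    nlinarith [hcM0 i, hPU i, hP0 i]
  have hk1 : Λ g ≤ ∑ i, ((c i + M)*(q i + εr) - M * P i) := by
    rw [hsplit]
    refine Finset.sum_le_sum fun i _ => ?_
    exact le_trans (hstep1 i) (hterm i)
  have hexp : ∑ i, ((c i + M)*(q i + εr) - M * P i)
      = ∑ i, c i * q i + (∑ i, (c i + M)) * εr + M * (∑ i, q i) - M * (∑ i, P i) := by
    rw [Finset.sum_mul, Finset.mul_sum, Finset.mul_sum]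
    rw [← Finset.sum_add_distrib, ← Finset.sum_add_distrib, ← Finset.sum_sub_distrib]
    apply Finset.sum_congr rfl
    intro i _
    ring
  have hk2 : Λ g ≤ ∑ i, c i * q i + (∑ i, (c i + M)) * εr := by
    rw [hexp, hPsum, hqsum] at hk1
    linarith
  -- bound the epsilon term
  have hεterm : (∑ i, (c i + M)) * εr ≤ δ * (2*‖g‖+4) := by
    have h1 : ∑ i, (c i + M) ≤ (m:ℝ) * (((m:ℝ)+1)*δ) := by
      calc ∑ i, (c i + M) ≤ ∑ _i : Fin m, ((m:ℝ)+1)*δ := Finset.sum_le_sum fun i _ => hcMub i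
        _ = (m:ℝ) * (((m:ℝ)+1)*δ) := by
          rw [Finset.sum_const, Finset.card_univ, Fintype.card_fin, nsmul_eq_mul]
    have h2 : 0 ≤ ∑ i, (c i + M) := Finset.sum_nonneg fun i _ => hcM0 i
    calc (∑ i, (c i + M)) * εr ≤ ((m:ℝ) * (((m:ℝ)+1)*δ)) * εr := by
          apply mul_le_mul_of_nonneg_right h1 (le_of_lt hεr0)
      _ = ((m:ℝ)+1)*δ*δ := by
          rw [hεr]; field_simp
      _ ≤ δ * (2*‖g‖+4) := by nlinarith
  -- integral bound
  have hint : Integrable (fun x => g x) μ :=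
    BoundedContinuousFunction.integrable μ (BoundedContinuousFunction.mkOfCompact g)
  have hci : ∀ i, c i * q i ≤ (∫ x in E i, g x ∂μ) + 2*δ*(q i) := by
    intro i
    have hlow : ∀ x ∈ E i, c i - 2*δ ≤ g x := by
      intro x hx
      simp only [hE, mem_preimage, mem_Ioc] at hx
      show a + (((i:ℕ):ℝ)+2)*δ - 2*δ ≤ g x
      nlinarith [hx.1]
    have := setIntegral_ge_of_const_le (hEmeas i) (measure_ne_top _ _) hlow hint.integrableOn
    rw [measureReal_def, smul_eq_mul] at this
    rw [hq]
    nlinarith [this]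
  have hintsum : ∑ i, ∫ x in E i, g x ∂μ = ∫ x, g x ∂μ := by
    have := integral_iUnion hEmeas hEdisj (hint.integrableOn (s := ⋃ i, E i))
    rw [hEcover] at this
    rw [tsum_fintype] at this
    rw [← this, setIntegral_univ]
  have hk3 : ∑ i, c i * q i ≤ (∫ x, g x ∂μ) + 2*δ*T := by
    calc ∑ i, c i * q i ≤ ∑ i, ((∫ x in E i, g x ∂μ) + 2*δ*(q i)) :=
          Finset.sum_le_sum fun i _ => hci i
      _ = (∑ i, ∫ x in E i, g x ∂μ) + 2*δ*(∑ i, q i) := by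
          rw [Finset.sum_add_distrib, Finset.mul_sum]
      _ = (∫ x, g x ∂μ) + 2*δ*T := by rw [hintsum, hqsum]
  have := hk2.trans (by linarith : ∑ i, c i * q i + (∑ i, (c i + M)) * εr
    ≤ (∫ x, g x ∂μ) + 2*δ*T + δ*(2*‖g‖+4))
  nlinarith [hT0]

end Main

section Equal

variable [MeasurableSpace X] [BorelSpace X]

theorem lam_le_integral (g : C(X, ℝ)) : Λ g ≤ ∫ x, g x ∂(rieszMeasure Λ hΛ) := by
  by_contra hcon
  push_neg at hcon
  set I : ℝ := ∫ x, g x ∂(rieszMeasure Λ hΛ) with hI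
  set C0 : ℝ := 2 * (rieszMeasure Λ hΛ univ).toReal + 2 * ‖g‖ + 6 with hC0def
  have hC0 : 0 < C0 := by
    have h1 : (0:ℝ) ≤ (rieszMeasure Λ hΛ univ).toReal := ENNReal.toReal_nonneg
    have h2 := norm_nonneg g
    rw [hC0def]; linarith
  set δ : ℝ := min 1 ((Λ g - I)/(2*C0)) with hδdef
  have hδ0 : 0 < δ := lt_min one_pos (by apply div_pos; linarith; linarith)
  have hδ1 : δ ≤ 1 := min_le_left _ _
  have hkey := lam_le_integral_aux Λ hΛ g hδ0 hδ1
  rw [← hI, ← hC0def] at hkey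
  have hd2 : δ ≤ (Λ g - I)/(2*C0) := min_le_right _ _
  have hd3 : δ * C0 ≤ (Λ g - I)/2 := by
    rw [le_div_iff₀ (by linarith : (0:ℝ) < 2*C0)] at hd2
    nlinarith
  clear_value I C0 δ
  linarith

theorem lam_eq_integral (g : C(X, ℝ)) : Λ g = ∫ x, g x ∂(rieszMeasure Λ hΛ) := by
  have h1 := lam_le_integral Λ hΛ g
  have h2 := lam_le_integral Λ hΛ (-g)
  rw [map_neg] at h2
  have h3 : ∫ x, (-g) x ∂(rieszMeasure Λ hΛ) = - ∫ x, g x ∂(rieszMeasure Λ hΛ) := by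
    simp only [ContinuousMap.neg_apply]
    exact integral_neg _
  rw [h3] at h2
  linarith

end Equal

section Jordan

omit hΛ

variable (L : C(X, ℝ) →L[ℝ] ℝ)

/-- the admissible minorants -/
def Sset (g : C(X, ℝ)) : Set C(X, ℝ) := {h | (∀ x, 0 ≤ h x) ∧ ∀ x, h x ≤ g x}

/-- the positive-part functional, on nonnegative functions -/
def pfun (g : C(X, ℝ)) : ℝ := sSup (L '' Sset g)

theorem pset_bddAbove (g : C(X, ℝ)) : BddAbove (L '' Sset g) := by
  refine ⟨‖L‖ * ‖g‖, ?_⟩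
  rintro y ⟨h, hh, rfl⟩
  have hnorm : ‖h‖ ≤ ‖g‖ := by
    rw [ContinuousMap.norm_le _ (norm_nonneg g)]
    intro x
    have h1 := hh.1 x
    have h2 := hh.2 x
    have h3 : |g x| ≤ ‖g‖ := by
      simpa [Real.norm_eq_abs] using g.norm_coe_le_norm x
    rw [Real.norm_eq_abs, abs_of_nonneg h1]
    cases' abs_le.mp h3 with h4 h5
    linarith
  calc L h ≤ ‖L h‖ := le_abs_self _
    _ ≤ ‖L‖ * ‖h‖ := L.le_opNorm h
    _ ≤ ‖L‖ * ‖g‖ := mul_le_mul_of_nonneg_left hnorm (norm_nonneg L)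

theorem pset_nonempty {g : C(X, ℝ)} (hg : ∀ x, 0 ≤ g x) : (L '' Sset g).Nonempty :=
  ⟨L 0, 0, ⟨fun x => le_refl _, fun x => by simpa using hg x⟩, rfl⟩

theorem pfun_nonneg {g : C(X, ℝ)} (hg : ∀ x, 0 ≤ g x) : 0 ≤ pfun L g := by
  have : L (0 : C(X,ℝ)) ≤ pfun L g :=
    le_csSup (pset_bddAbove L g) ⟨0, ⟨fun x => le_refl _, fun x => by simpa using hg x⟩, rfl⟩
  simpa using this

theorem le_pfun {g h : C(X, ℝ)} (hh : h ∈ Sset g) : L h ≤ pfun L g :=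
  le_csSup (pset_bddAbove L g) ⟨h, hh, rfl⟩

theorem self_le_pfun {g : C(X, ℝ)} (hg : ∀ x, 0 ≤ g x) : L g ≤ pfun L g :=
  le_pfun L ⟨hg, fun x => le_refl _⟩

theorem pfun_zero : pfun L 0 = 0 := by
  have : Sset (0 : C(X,ℝ)) = {0} := by
    ext h
    simp only [Sset, mem_setOf_eq, mem_singleton_iff]
    constructor
    · rintro ⟨h1, h2⟩
      ext x
      have := h1 x; have := h2 x
      simp only [ContinuousMap.zero_apply] at *
      linarith
    · rintro rfl
      exact ⟨fun x => le_refl _, fun x => le_refl _⟩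
  rw [pfun, this]
  simp

theorem pfun_add {g₁ g₂ : C(X, ℝ)} (hg₁ : ∀ x, 0 ≤ g₁ x) (hg₂ : ∀ x, 0 ≤ g₂ x) :
    pfun L (g₁ + g₂) = pfun L g₁ + pfun L g₂ := by
  have hg12 : ∀ x, 0 ≤ (g₁ + g₂) x := fun x => by
    simp only [ContinuousMap.add_apply]; have := hg₁ x; have := hg₂ x; linarith
  apply le_antisymm
  · apply csSup_le (pset_nonempty L hg12)
    rintro y ⟨h, hh, rfl⟩
    set h₁ : C(X, ℝ) := h ⊓ g₁ with hh₁
    set h₂ : C(X, ℝ) := h - h₁ with hh₂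
    have hmem₁ : h₁ ∈ Sset g₁ := by
      constructor
      · intro x
        simp only [hh₁, ContinuousMap.inf_apply, le_inf_iff]
        exact ⟨hh.1 x, hg₁ x⟩
      · intro x
        simp only [hh₁, ContinuousMap.inf_apply]
        exact inf_le_right
    have hmem₂ : h₂ ∈ Sset g₂ := by
      constructor
      · intro x
        simp only [hh₂, hh₁, ContinuousMap.sub_apply, ContinuousMap.inf_apply, sub_nonneg]
        exact inf_le_left
      · intro x
        simp only [hh₂, hh₁, ContinuousMap.sub_apply, ContinuousMap.inf_apply]
        have h1 := hh.2 x
        have h2 := hg₁ x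
        have h3 := hg₂ x
        simp only [ContinuousMap.add_apply] at h1
        rcases le_total (h x) (g₁ x) with hc | hc
        · rw [inf_eq_left.mpr hc]; simpa using h3
        · rw [inf_eq_right.mpr hc]; linarith
    have hsplit : h = h₁ + h₂ := by rw [hh₂]; ring
    calc L h = L h₁ + L h₂ := by rw [hsplit, map_add]
      _ ≤ pfun L g₁ + pfun L g₂ := add_le_add (le_pfun L hmem₁) (le_pfun L hmem₂)
  · have key : ∀ y₁ ∈ L '' Sset g₁, ∀ y₂ ∈ L '' Sset g₂, y₁ + y₂ ≤ pfun L (g₁ + g₂) := by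
      rintro y₁ ⟨h₁, hh₁, rfl⟩ y₂ ⟨h₂, hh₂, rfl⟩
      have : h₁ + h₂ ∈ Sset (g₁ + g₂) := by
        constructor
        · intro x
          simp only [ContinuousMap.add_apply]
          have := hh₁.1 x; have := hh₂.1 x; linarith
        · intro x
          simp only [ContinuousMap.add_apply]
          have := hh₁.2 x; have := hh₂.2 x; linarith
      have := le_pfun L this
      rwa [map_add] at this
    have h1 : pfun L g₁ ≤ pfun L (g₁ + g₂) - pfun L g₂ := by
      apply csSup_le (pset_nonempty L hg₁)
      rintro y₁ hy₁
      have h2 : pfun L g₂ ≤ pfun L (g₁ + g₂) - y₁ := by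
        apply csSup_le (pset_nonempty L hg₂)
        rintro y₂ hy₂
        have := key y₁ hy₁ y₂ hy₂
        linarith
      linarith
    linarith

theorem pfun_smul {c : ℝ} (hc : 0 ≤ c) {g : C(X, ℝ)} (hg : ∀ x, 0 ≤ g x) :
    pfun L (c • g) = c * pfun L g := by
  rcases eq_or_lt_of_le hc with rfl | hcpos
  · simp only [zero_smul, zero_mul, pfun_zero L]
  have hcg : ∀ x, 0 ≤ (c • g) x := fun x => by
    simp only [ContinuousMap.smul_apply, smul_eq_mul]
    exact mul_nonneg hc (hg x)
  apply le_antisymm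
  · apply csSup_le (pset_nonempty L hcg)
    rintro y ⟨h, hh, rfl⟩
    have hmem : c⁻¹ • h ∈ Sset g := by
      constructor
      · intro x
        simp only [ContinuousMap.smul_apply, smul_eq_mul]
        exact mul_nonneg (inv_nonneg.mpr hc) (hh.1 x)
      · intro x
        simp only [ContinuousMap.smul_apply, smul_eq_mul]
        have := hh.2 x
        simp only [ContinuousMap.smul_apply, smul_eq_mul] at this
        rw [inv_mul_le_iff₀ hcpos]
        exact this
    have h1 : L h = c * L (c⁻¹ • h) := by
      rw [_root_.map_smul, smul_eq_mul, ← mul_assoc, mul_inv_cancel₀ (ne_of_gt hcpos), one_mul]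
    rw [h1]
    exact mul_le_mul_of_nonneg_left (le_pfun L hmem) hc
  · rw [← le_div_iff₀' hcpos]
    apply csSup_le (pset_nonempty L hg)
    rintro y ⟨h, hh, rfl⟩
    have hmem : c • h ∈ Sset (c • g) := by
      constructor
      · intro x
        simp only [ContinuousMap.smul_apply, smul_eq_mul]
        exact mul_nonneg hc (hh.1 x)
      · intro x
        simp only [ContinuousMap.smul_apply, smul_eq_mul]
        exact mul_le_mul_of_nonneg_left (hh.2 x) hc
    have := le_pfun L hmem
    rw [_root_.map_smul, smul_eq_mul] at this
    rw [le_div_iff₀' hcpos]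
    exact this

theorem pfun_swap {a b c d : C(X, ℝ)} (ha : ∀ x, 0 ≤ a x) (hb : ∀ x, 0 ≤ b x)
    (hc : ∀ x, 0 ≤ c x) (hd : ∀ x, 0 ≤ d x) (h : a - b = c - d) :
    pfun L a - pfun L b = pfun L c - pfun L d := by
  have hsum : a + d = c + b := by
    have := sub_eq_sub_iff_add_eq_add.mp h
    linear_combination (norm := abel) this
  have h1 : pfun L (a + d) = pfun L a + pfun L d := pfun_add L ha hd
  have h2 : pfun L (c + b) = pfun L c + pfun L b := pfun_add L hc hb
  rw [hsum, h2] at h1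
  linarith

end Jordan

section Jordan2

omit hΛ

variable (L : C(X, ℝ) →L[ℝ] ℝ)

theorem posPart_nonneg (g : C(X, ℝ)) : ∀ x, 0 ≤ (g ⊔ 0) x := fun x => by
  simp only [ContinuousMap.sup_apply, ContinuousMap.zero_apply]
  exact le_sup_right

theorem posPart_decomp (g : C(X, ℝ)) : ∀ x, (g ⊔ 0) x - ((-g) ⊔ 0) x = g x := by
  intro x
  simp only [ContinuousMap.sup_apply, ContinuousMap.zero_apply, ContinuousMap.neg_apply]
  rcases le_total 0 (g x) with h | h
  · rw [sup_eq_left.mpr h, sup_eq_right.mpr (by linarith : -g x ≤ 0)]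
    ring
  · rw [sup_eq_right.mpr h, sup_eq_left.mpr (by linarith : (0:ℝ) ≤ -g x)]
    ring

theorem posPart_decomp' (g : C(X, ℝ)) : (g ⊔ 0) - ((-g) ⊔ 0) = g := by
  ext x
  simp only [ContinuousMap.sub_apply]
  exact posPart_decomp g x

/-- the positive part functional on all of C(X,ℝ) -/
def Pfun (g : C(X, ℝ)) : ℝ := pfun L (g ⊔ 0) - pfun L ((-g) ⊔ 0)

theorem Pfun_eq {g a b : C(X, ℝ)} (ha : ∀ x, 0 ≤ a x) (hb : ∀ x, 0 ≤ b x)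
    (hab : g = a - b) : Pfun L g = pfun L a - pfun L b := by
  apply pfun_swap L (posPart_nonneg g) (posPart_nonneg (-g)) ha hb
  rw [posPart_decomp' g, hab]

theorem Pfun_of_nonneg {g : C(X, ℝ)} (hg : ∀ x, 0 ≤ g x) : Pfun L g = pfun L g := by
  have := Pfun_eq L hg (fun x => le_refl (0:ℝ)) (show g = g - 0 by simp)
  simp only [pfun_zero L, sub_zero] at this
  convert this using 2

theorem Pfun_add (g₁ g₂ : C(X, ℝ)) : Pfun L (g₁ + g₂) = Pfun L g₁ + Pfun L g₂ := by
  have ha : ∀ x, 0 ≤ ((g₁ ⊔ 0) + (g₂ ⊔ 0)) x := fun x => by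
    simp only [ContinuousMap.add_apply]
    have := posPart_nonneg g₁ x; have := posPart_nonneg g₂ x; linarith
  have hb : ∀ x, 0 ≤ (((-g₁) ⊔ 0) + ((-g₂) ⊔ 0)) x := fun x => by
    simp only [ContinuousMap.add_apply]
    have := posPart_nonneg (-g₁) x; have := posPart_nonneg (-g₂) x; linarith
  have hdecomp : g₁ + g₂ = ((g₁ ⊔ 0) + (g₂ ⊔ 0)) - (((-g₁) ⊔ 0) + ((-g₂) ⊔ 0)) := by
    ext x
    simp only [ContinuousMap.add_apply, ContinuousMap.sub_apply]
    have h1 := posPart_decomp g₁ x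
    have h2 := posPart_decomp g₂ x
    linarith
  rw [Pfun_eq L ha hb hdecomp,
    pfun_add L (posPart_nonneg g₁) (posPart_nonneg g₂),
    pfun_add L (posPart_nonneg (-g₁)) (posPart_nonneg (-g₂))]
  show _ = (pfun L (g₁ ⊔ 0) - pfun L ((-g₁) ⊔ 0)) + (pfun L (g₂ ⊔ 0) - pfun L ((-g₂) ⊔ 0))
  ring

theorem Pfun_smul (c : ℝ) (g : C(X, ℝ)) : Pfun L (c • g) = c * Pfun L g := by
  rcases le_or_gt 0 c with hc | hc
  · have ha : ∀ x, 0 ≤ (c • (g ⊔ 0)) x := fun x => by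
      simp only [ContinuousMap.smul_apply, smul_eq_mul]
      exact mul_nonneg hc (posPart_nonneg g x)
    have hb : ∀ x, 0 ≤ (c • ((-g) ⊔ 0)) x := fun x => by
      simp only [ContinuousMap.smul_apply, smul_eq_mul]
      exact mul_nonneg hc (posPart_nonneg (-g) x)
    have hdecomp : c • g = (c • (g ⊔ 0)) - (c • ((-g) ⊔ 0)) := by
      ext x
      simp only [ContinuousMap.smul_apply, ContinuousMap.sub_apply, smul_eq_mul]
      have := posPart_decomp g x
      nlinarith [posPart_decomp g x]
    rw [Pfun_eq L ha hb hdecomp, pfun_smul L hc (posPart_nonneg g),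
      pfun_smul L hc (posPart_nonneg (-g))]
    show _ = c * (pfun L (g ⊔ 0) - pfun L ((-g) ⊔ 0))
    ring
  · have hc' : 0 ≤ -c := by linarith
    have ha : ∀ x, 0 ≤ ((-c) • ((-g) ⊔ 0)) x := fun x => by
      simp only [ContinuousMap.smul_apply, smul_eq_mul]
      exact mul_nonneg hc' (posPart_nonneg (-g) x)
    have hb : ∀ x, 0 ≤ ((-c) • (g ⊔ 0)) x := fun x => by
      simp only [ContinuousMap.smul_apply, smul_eq_mul]
      exact mul_nonneg hc' (posPart_nonneg g x)
    have hdecomp : c • g = ((-c) • ((-g) ⊔ 0)) - ((-c) • (g ⊔ 0)) := by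
      ext x
      simp only [ContinuousMap.smul_apply, ContinuousMap.sub_apply, smul_eq_mul]
      nlinarith [posPart_decomp g x]
    rw [Pfun_eq L ha hb hdecomp, pfun_smul L hc' (posPart_nonneg (-g)),
      pfun_smul L hc' (posPart_nonneg g)]
    show _ = c * (pfun L (g ⊔ 0) - pfun L ((-g) ⊔ 0))
    ring

/-- the positive part as a linear functional -/
def Plin : C(X, ℝ) →ₗ[ℝ] ℝ where
  toFun := Pfun L
  map_add' := Pfun_add L
  map_smul' := fun c g => by simp only [smul_eq_mul, RingHom.id_apply]; exact Pfun_smul L c g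

theorem Plin_pos : ∀ g : C(X, ℝ), (0:C(X,ℝ)) ≤ g → 0 ≤ Plin L g := by
  intro g hg
  have hg' : ∀ x, 0 ≤ g x := fun x => by
    have := ContinuousMap.le_def.mp hg x
    simpa using this
  show 0 ≤ Pfun L g
  rw [Pfun_of_nonneg L hg']
  exact pfun_nonneg L hg'

/-- the negative part as a linear functional -/
def Nlin : C(X, ℝ) →ₗ[ℝ] ℝ := Plin L - (L : C(X, ℝ) →ₗ[ℝ] ℝ)

theorem Nlin_pos : ∀ g : C(X, ℝ), (0:C(X,ℝ)) ≤ g → 0 ≤ Nlin L g := by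
  intro g hg
  have hg' : ∀ x, 0 ≤ g x := fun x => by
    have := ContinuousMap.le_def.mp hg x
    simpa using this
  show 0 ≤ Plin L g - L g
  have h1 : L g ≤ pfun L g := self_le_pfun L hg'
  have h2 : Plin L g = pfun L g := Pfun_of_nonneg L hg'
  linarith

theorem L_decomp (g : C(X, ℝ)) : L g = Plin L g - Nlin L g := by
  show L g = Plin L g - (Plin L g - L g)
  ring

end Jordan2

section Repr

variable [MeasurableSpace X] [BorelSpace X]

omit hΛ in
/-- Riesz representation for continuous functionals on C(X,ℝ), X compact metric:
every functional is the difference of integrals against two finite Borel measures. -/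
theorem exists_repr_measures (L : C(X, ℝ) →L[ℝ] ℝ) :
    ∃ μ₁ μ₂ : Measure X, IsFiniteMeasure μ₁ ∧ IsFiniteMeasure μ₂ ∧
      ∀ g : C(X, ℝ), L g = (∫ x, g x ∂μ₁) - ∫ x, g x ∂μ₂ := by
  refine ⟨rieszMeasure (Plin L) (Plin_pos L), rieszMeasure (Nlin L) (Nlin_pos L),
    inferInstance, inferInstance, fun g => ?_⟩
  rw [← lam_eq_integral (Plin L) (Plin_pos L) g, ← lam_eq_integral (Nlin L) (Nlin_pos L) g]
  exact L_decomp L g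

end Repr


end RMKaux

theorem continuous_sigmoid' : Continuous sigmoid := by
  apply Continuous.div continuous_const
  · continuity
  · intro t
    have := Real.exp_pos (-t)
    intro h
    linarith

open MeasureTheory in
theorem stmt_5 {n d : ℕ} (hn : 1 ≤ n) (hd : 1 ≤ d)
    (K : Set (Fin n → EuclideanSpace ℝ (Fin d))) (hK : IsCompact K)
    (k : (Fin n → EuclideanSpace ℝ (Fin d)) → (Fin n → EuclideanSpace ℝ (Fin d)) → ℝ)
    (hk : ∀ Y, ContinuousOn (k Y) K)
    (hdisc : ∀ (μ₁ μ₂ : Measure K), IsFiniteMeasure μ₁ → IsFiniteMeasure μ₂ →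
      μ₁.Regular → μ₂.Regular →
      (∀ (Y : Fin n → EuclideanSpace ℝ (Fin d)) (θ : ℝ),
        ∫ x, sigmoid (k Y (x : Fin n → EuclideanSpace ℝ (Fin d)) + θ) ∂μ₁ =
        ∫ x, sigmoid (k Y (x : Fin n → EuclideanSpace ℝ (Fin d)) + θ) ∂μ₂) →
      μ₁ = μ₂)
    (f : K → ℝ) (hf : Continuous f) (ε : ℝ) (hε : 0 < ε) :
    ∃ (m : ℕ) (α β : Fin m → ℝ) (Q : Fin m → (Fin n → EuclideanSpace ℝ (Fin d))),
      ∀ x : K, |f x - ∑ j, α j * sigmoid (k (Q j) (x : Fin n → EuclideanSpace ℝ (Fin d)) + β j)| < ε := by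
    classical
  haveI : CompactSpace K := isCompact_iff_compactSpace.mp hK
  -- the generator functions
  set gen : (Fin n → EuclideanSpace ℝ (Fin d)) → ℝ → C(K, ℝ) := fun Y θ =>
    ⟨fun x => sigmoid (k Y (x : Fin n → EuclideanSpace ℝ (Fin d)) + θ),
      continuous_sigmoid'.comp (((hk Y).restrict).add continuous_const)⟩ with hgen
  set genSet : Set C(K, ℝ) := {g | ∃ Y θ, g = gen Y θ} with hgenSet
  set S : Submodule ℝ C(K, ℝ) := Submodule.span ℝ genSet with hS
  set F : C(K, ℝ) := ⟨f, hf⟩ with hF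
  by_cases hmem : F ∈ S.topologicalClosure
  · -- approximate within ε
    have hclo : F ∈ closure (S : Set C(K, ℝ)) := hmem
    obtain ⟨F', hF'S, hdist⟩ := Metric.mem_closure_iff.mp hclo ε hε
    obtain ⟨m, c, gfun, hsum⟩ := Submodule.mem_span_set'.mp hF'S
    have hprop : ∀ j : Fin m, ∃ Y θ, (gfun j : C(K, ℝ)) = gen Y θ := fun j => (gfun j).2
    choose Q β hQβ using hprop
    refine ⟨m, c, β, Q, fun x => ?_⟩
    have hFx : ∑ j, c j * sigmoid (k (Q j) (x : Fin n → EuclideanSpace ℝ (Fin d)) + β j)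
        = F' x := by
      rw [← hsum]
      rw [ContinuousMap.coe_sum, Finset.sum_apply]
      apply Finset.sum_congr rfl
      intro j _
      rw [ContinuousMap.smul_apply, hQβ j]
      simp only [smul_eq_mul]
      rfl
    rw [hFx]
    have h1 : dist (F x) (F' x) ≤ dist F F' := ContinuousMap.dist_apply_le_dist x
    rw [Real.dist_eq] at h1
    calc |f x - F' x| = |F x - F' x| := rfl
      _ ≤ dist F F' := h1
      _ < ε := hdist
  · -- separation + Riesz representation + discriminatory hypothesis: contradiction
    exfalso
    obtain ⟨l, u, hlt, hgt⟩ := geometric_hahn_banach_closed_point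
      (s := (S.topologicalClosure : Set C(K, ℝ))) (x := F)
      (S.topologicalClosure.convex) (S.isClosed_topologicalClosure) hmem
    have hl0 : ∀ a ∈ S.topologicalClosure, l a = 0 := by
      intro a ha
      by_contra hla
      have h1 : ∀ t : ℝ, t * l a < u := by
        intro t
        have := hlt (t • a) (S.topologicalClosure.smul_mem t ha)
        rwa [_root_.map_smul, smul_eq_mul] at this
      have h2 := h1 ((u + 1) / l a)
      rw [div_mul_cancel₀ _ hla] at h2
      linarith
    have hu0 : 0 < u := by
      have := hlt 0 (S.topologicalClosure.zero_mem)
      rwa [map_zero] at this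
    have hlF : 0 < l F := lt_trans hu0 hgt
    obtain ⟨μ₁, μ₂, hfin₁, hfin₂, hrep⟩ := RMKaux.exists_repr_measures (X := K) l
    haveI := hfin₁
    haveI := hfin₂
    have hreg₁ : μ₁.Regular := by infer_instance
    have hreg₂ : μ₂.Regular := by infer_instance
    have hint : ∀ (Y : Fin n → EuclideanSpace ℝ (Fin d)) (θ : ℝ),
        ∫ x, sigmoid (k Y (x : K) + θ) ∂μ₁ = ∫ x, sigmoid (k Y (x : K) + θ) ∂μ₂ := by
      intro Y θ
      have hmem' : gen Y θ ∈ S.topologicalClosure :=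
        S.le_topologicalClosure (Submodule.subset_span ⟨Y, θ, rfl⟩)
      have h0 : l (gen Y θ) = 0 := hl0 _ hmem'
      have := hrep (gen Y θ)
      rw [h0] at this
      have heq : ∀ μ : Measure K, (∫ x, (gen Y θ) x ∂μ)
          = ∫ x, sigmoid (k Y (x : K) + θ) ∂μ := fun μ => rfl
      rw [heq μ₁, heq μ₂] at this
      linarith
    have hμeq : μ₁ = μ₂ := hdisc μ₁ μ₂ hfin₁ hfin₂ hreg₁ hreg₂ hint
    have := hrep F
    rw [hμeq, sub_self] at this
    rw [this] at hlF
    exact lt_irrefl 0 hlF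
end
end

section
/- (Separation axiom for W_L2.) For two point clouds X, Y : Fin n → EuclideanSpace ℝ (Fin d) of the same size n, W_L2(X,Y) = 0 if and only if there exists a permutation π of Fin n such that Y j = X (π j) for all j, i.e., X and Y are equal as point clouds (multisets). -/
open scoped RealInnerProductSpace BigOperators

noncomputable section

open scoped Classical
open Finset

lemma perm_mem_coupling {n : ℕ} (π : Equiv.Perm (Fin n)) :
    (fun i j => if i = π j then (1:ℝ)/n else 0) ∈ Coupling n n := by
  refine ⟨fun i j => by positivity, fun i => ?_, fun j => ?_⟩
  · have h : ∀ j : Fin n, (if i = π j then (1:ℝ)/n else 0)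
        = if π.symm i = j then (1:ℝ)/n else 0 := by
      intro j; congr 1
      rw [eq_iff_iff]
      constructor
      · intro h; simp [h]
      · intro h; simp [← h]
    rw [Finset.sum_congr rfl fun j _ => h j, Finset.sum_ite_eq]
    simp
  · simp

lemma exists_perm_of_counts {n d : ℕ} (X Y : Fin n → EuclideanSpace ℝ (Fin d))
    (h : ∀ v, Fintype.card {i // X i = v} = Fintype.card {j // Y j = v}) :
    ∃ π : Equiv.Perm (Fin n), ∀ j, Y j = X (π j) := by
  have e : ∀ v : EuclideanSpace ℝ (Fin d), {j // Y j = v} ≃ {i // X i = v} := fun v =>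
    Fintype.equivOfCardEq (h v).symm
  refine ⟨((Equiv.sigmaFiberEquiv Y).symm.trans
    ((Equiv.sigmaCongrRight e).trans (Equiv.sigmaFiberEquiv X))), fun j => ?_⟩
  simp [Equiv.sigmaFiberEquiv, Equiv.sigmaCongrRight]
  exact ((e (Y j)) ⟨j, rfl⟩).2.symm

lemma count_claim {n d : ℕ} (X Y : Fin n → EuclideanSpace ℝ (Fin d))
    {T : Matrix (Fin n) (Fin n) ℝ} (hT : T ∈ Coupling n n) (v : EuclideanSpace ℝ (Fin d)) :
    ((univ.filter fun i => X i = v).card : ℝ) / n ≤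
      ((univ.filter fun j => Y j = v).card : ℝ) / n +
        ∑ i, ∑ j, if X i = Y j then 0 else T i j := by
  obtain ⟨hpos, hrow, hcol⟩ := hT
  have hite : ∀ i j, (0:ℝ) ≤ if X i = Y j then 0 else T i j := by
    intro i j; split
    · exact le_rfl
    · exact hpos i j
  have h1 : ((univ.filter fun i => X i = v).card : ℝ) / n
      = ∑ i ∈ univ.filter fun i => X i = v, ∑ j, T i j := by
    rw [Finset.sum_congr rfl fun i _ => hrow i, Finset.sum_const, nsmul_eq_mul]
    ring
  rw [h1]
  have hsplit : ∀ i, (∑ j, T i j)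
      = (∑ j ∈ univ.filter (fun j => Y j = v), T i j)
        + ∑ j ∈ univ.filter (fun j => ¬ Y j = v), T i j :=
    fun i => (Finset.sum_filter_add_sum_filter_not univ _ _).symm
  rw [Finset.sum_congr rfl fun i _ => hsplit i, Finset.sum_add_distrib]
  have hA : (∑ i ∈ univ.filter fun i => X i = v,
      ∑ j ∈ univ.filter (fun j => Y j = v), T i j)
      ≤ ((univ.filter fun j => Y j = v).card : ℝ) / n := by
    rw [Finset.sum_comm (f := fun i j => T i j)]
    have step : ∀ j ∈ univ.filter (fun j => Y j = v),
        (∑ i ∈ univ.filter fun i => X i = v, T i j) ≤ 1 / (n:ℝ) := by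
      intro j _
      rw [← hcol j]
      exact Finset.sum_le_sum_of_subset_of_nonneg (Finset.filter_subset _ _)
        (fun i _ _ => hpos i j)
    calc (∑ j ∈ univ.filter (fun j => Y j = v),
          ∑ i ∈ univ.filter fun i => X i = v, T i j)
        ≤ ∑ _j ∈ univ.filter (fun j => Y j = v), 1 / (n:ℝ) :=
          Finset.sum_le_sum step
      _ = ((univ.filter fun j => Y j = v).card : ℝ) / n := by
          rw [Finset.sum_const, nsmul_eq_mul]; ring
  have hB : (∑ i ∈ univ.filter fun i => X i = v,
      ∑ j ∈ univ.filter (fun j => ¬ Y j = v), T i j)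
      ≤ ∑ i, ∑ j, if X i = Y j then 0 else T i j := by
    have hrw : ∀ i ∈ univ.filter (fun i => X i = v),
        (∑ j ∈ univ.filter (fun j => ¬ Y j = v), T i j)
        = ∑ j ∈ univ.filter (fun j => ¬ Y j = v), if X i = Y j then 0 else T i j := by
      intro i hi
      refine Finset.sum_congr rfl fun j hj => ?_
      have hiv : X i = v := (Finset.mem_filter.mp hi).2
      have hjv : ¬ Y j = v := (Finset.mem_filter.mp hj).2
      rw [if_neg]
      intro hh
      exact hjv (hh ▸ hiv)
    rw [Finset.sum_congr rfl hrw]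
    calc (∑ i ∈ univ.filter fun i => X i = v,
          ∑ j ∈ univ.filter (fun j => ¬ Y j = v), if X i = Y j then 0 else T i j)
        ≤ ∑ i ∈ univ.filter fun i => X i = v,
            ∑ j, if X i = Y j then 0 else T i j :=
          Finset.sum_le_sum fun i _ =>
            Finset.sum_le_sum_of_subset_of_nonneg (Finset.filter_subset _ _)
              (fun j _ _ => hite i j)
      _ ≤ ∑ i, ∑ j, if X i = Y j then 0 else T i j :=
          Finset.sum_le_sum_of_subset_of_nonneg (Finset.filter_subset _ _)
            (fun i _ _ => Finset.sum_nonneg fun j _ => hite i j)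
  exact add_le_add hA hB

theorem stmt_7 {n d : ℕ} (X Y : Fin n → EuclideanSpace ℝ (Fin d)) :
    WL2 X Y = 0 ↔ ∃ π : Equiv.Perm (Fin n), ∀ j, Y j = X (π j) := by
  classical
  have hlb : ∀ x ∈ ((fun T : Matrix (Fin n) (Fin n) ℝ =>
      ∑ i, ∑ j, T i j * ‖X i - Y j‖ ^ 2) '' Coupling n n), (0:ℝ) ≤ x := by
    rintro x ⟨T, ⟨hpos, -, -⟩, rfl⟩
    exact Finset.sum_nonneg fun i _ => Finset.sum_nonneg fun j _ =>
      mul_nonneg (hpos i j) (sq_nonneg _)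
  constructor
  · intro h0
    by_contra hno
    push_neg at hno
    have hcounts : ∃ v, (univ.filter fun i => X i = v).card ≠
        (univ.filter fun j => Y j = v).card := by
      by_contra hc
      push_neg at hc
      obtain ⟨π, hπ⟩ := exists_perm_of_counts X Y (fun v => by
        rw [Fintype.card_subtype, Fintype.card_subtype]; exact hc v)
      obtain ⟨j, hj⟩ := hno π
      exact hj (hπ j)
    obtain ⟨v, hv⟩ := hcounts
    have hn : (0:ℝ) < n := by
      rcases Nat.eq_zero_or_pos n with h | h
      · subst h; simp at hv
      · exact_mod_cast h
    have hSne : (univ.filter fun p : Fin n × Fin n => X p.1 ≠ Y p.2).Nonempty := by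
      by_contra hS
      rw [Finset.not_nonempty_iff_eq_empty, Finset.filter_eq_empty_iff] at hS
      obtain ⟨j, hj⟩ := hno (Equiv.refl _)
      have h2 := hS (Finset.mem_univ ((j, j) : Fin n × Fin n))
      push_neg at h2
      exact hj h2.symm
    set S := univ.filter fun p : Fin n × Fin n => X p.1 ≠ Y p.2 with hSdef
    set ε := S.inf' hSne fun p => ‖X p.1 - Y p.2‖ ^ 2 with hεdef
    have hε : 0 < ε := by
      obtain ⟨p, hp, hpe⟩ := Finset.exists_mem_eq_inf' hSne fun p => ‖X p.1 - Y p.2‖ ^ 2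
      rw [hεdef, hpe]
      have hpne : X p.1 - Y p.2 ≠ 0 := sub_ne_zero.mpr
        (by simpa [hSdef] using (Finset.mem_filter.mp hp).2)
      exact pow_pos (norm_pos_iff.mpr hpne) 2
    have hbound : ∀ x ∈ ((fun T : Matrix (Fin n) (Fin n) ℝ =>
        ∑ i, ∑ j, T i j * ‖X i - Y j‖ ^ 2) '' Coupling n n), ε / n ≤ x := by
      rintro x ⟨T, hT, rfl⟩
      obtain ⟨hpos, hrow, hcol⟩ := id hT
      set M := ∑ i, ∑ j, if X i = Y j then 0 else T i j with hM
      have hTt : (fun j i => T i j) ∈ Coupling n n :=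
        ⟨fun j i => hpos i j, fun j => hcol j, fun i => hrow i⟩
      have hclaim1 := count_claim X Y hT v
      have hclaim2 := count_claim Y X hTt v
      have hMM : (∑ j, ∑ i, if Y j = X i then 0 else T i j) = M := by
        rw [Finset.sum_comm]
        refine Finset.sum_congr rfl fun i _ => Finset.sum_congr rfl fun j _ => ?_
        simp [eq_comm]
      rw [hMM] at hclaim2
      have hM1 : 1 / (n:ℝ) ≤ M := by
        rcases Nat.lt_or_ge (univ.filter fun i => X i = v).card
            (univ.filter fun j => Y j = v).card with h | h
        · have hc : ((univ.filter fun i => X i = v).card : ℝ) + 1 ≤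
              (univ.filter fun j => Y j = v).card := by exact_mod_cast h
          have hd : (((univ.filter fun i => X i = v).card : ℝ) + 1) / n ≤
              ((univ.filter fun j => Y j = v).card : ℝ) / n := by gcongr
          rw [add_div] at hd
          linarith
        · have hlt : (univ.filter fun j => Y j = v).card <
              (univ.filter fun i => X i = v).card := lt_of_le_of_ne h (Ne.symm hv)
          have hc : ((univ.filter fun j => Y j = v).card : ℝ) + 1 ≤
              (univ.filter fun i => X i = v).card := by exact_mod_cast hlt
          have hd : (((univ.filter fun j => Y j = v).card : ℝ) + 1) / n ≤
              ((univ.filter fun i => X i = v).card : ℝ) / n := by gcongr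
          rw [add_div] at hd
          linarith
      have hM2 : ε * M ≤ ∑ i, ∑ j, T i j * ‖X i - Y j‖ ^ 2 := by
        rw [hM, Finset.mul_sum]
        refine Finset.sum_le_sum fun i _ => ?_
        rw [Finset.mul_sum]
        refine Finset.sum_le_sum fun j _ => ?_
        split_ifs with h
        · rw [mul_zero]
          exact mul_nonneg (hpos i j) (sq_nonneg _)
        · have hin : (i, j) ∈ S := Finset.mem_filter.mpr ⟨Finset.mem_univ _, h⟩
          have hle : ε ≤ ‖X i - Y j‖ ^ 2 := Finset.inf'_le _ hin
          calc ε * T i j = T i j * ε := mul_comm _ _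
            _ ≤ T i j * ‖X i - Y j‖ ^ 2 := mul_le_mul_of_nonneg_left hle (hpos i j)
      calc ε / n = ε * (1 / n) := by ring
        _ ≤ ε * M := mul_le_mul_of_nonneg_left hM1 hε.le
        _ ≤ _ := hM2
    have hne : ((fun T : Matrix (Fin n) (Fin n) ℝ =>
        ∑ i, ∑ j, T i j * ‖X i - Y j‖ ^ 2) '' Coupling n n).Nonempty :=
      ⟨_, ⟨_, perm_mem_coupling (Equiv.refl _), rfl⟩⟩
    have hmain : ε / n ≤ WL2 X Y := le_csInf hne hbound
    rw [h0] at hmain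
    have : 0 < ε / n := div_pos hε hn
    linarith
  · rintro ⟨π, hπ⟩
    have hval : (∑ i, ∑ j, (fun i j => if i = π j then (1:ℝ)/n else 0) i j *
        ‖X i - Y j‖ ^ 2) = 0 := by
      refine Finset.sum_eq_zero fun i _ => Finset.sum_eq_zero fun j _ => ?_
      simp only
      split_ifs with h
      · rw [h, ← hπ j]
        simp
      · rw [zero_mul]
    have hmem : (0:ℝ) ∈ ((fun T : Matrix (Fin n) (Fin n) ℝ =>
        ∑ i, ∑ j, T i j * ‖X i - Y j‖ ^ 2) '' Coupling n n) :=
      ⟨_, perm_mem_coupling π, hval⟩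
    exact le_antisymm (csInf_le ⟨0, fun x hx => hlb x hx⟩ hmem)
      (le_csInf ⟨0, hmem⟩ hlb)
end
end

section
/- (The square root of W_L2 satisfies the triangle inequality.) For point clouds X of size n, Y of size m, and Z of size p in ℝ^d, one has √(W_L2(X,Z)) ≤ √(W_L2(X,Y)) + √(W_L2(Y,Z)). In particular, √W_L2 defines a (pseudo-)metric on point clouds. -/
open scoped RealInnerProductSpace BigOperators

noncomputable section

/-- The uniform coupling. -/
lemma uniform_mem_coupling {n m : ℕ} (hn : 1 ≤ n) (hm : 1 ≤ m) :
    (fun _ _ => 1 / ((n : ℝ) * m) : Matrix (Fin n) (Fin m) ℝ) ∈ Coupling n m := by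
  have hn0 : (n : ℝ) ≠ 0 := Nat.cast_ne_zero.2 (by omega)
  have hm0 : (m : ℝ) ≠ 0 := Nat.cast_ne_zero.2 (by omega)
  refine ⟨fun i j => by positivity, fun i => ?_, fun j => ?_⟩
  · simp [Finset.sum_const, Finset.card_univ]
    field_simp
  · simp [Finset.sum_const, Finset.card_univ]
    field_simp

lemma coupling_nonempty {n m : ℕ} (hn : 1 ≤ n) (hm : 1 ≤ m) :
    (Coupling n m).Nonempty := ⟨_, uniform_mem_coupling hn hm⟩

lemma cost_nonneg {n m d : ℕ} (X : Fin n → EuclideanSpace ℝ (Fin d))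
    (Y : Fin m → EuclideanSpace ℝ (Fin d)) {T : Matrix (Fin n) (Fin m) ℝ}
    (hT : T ∈ Coupling n m) :
    0 ≤ ∑ i, ∑ j, T i j * ‖X i - Y j‖ ^ 2 :=
  Finset.sum_nonneg fun i _ => Finset.sum_nonneg fun j _ =>
    mul_nonneg (hT.1 i j) (sq_nonneg _)

lemma cost_bddBelow {n m d : ℕ} (X : Fin n → EuclideanSpace ℝ (Fin d))
    (Y : Fin m → EuclideanSpace ℝ (Fin d)) :
    BddBelow ((fun T : Matrix (Fin n) (Fin m) ℝ =>
      ∑ i, ∑ j, T i j * ‖X i - Y j‖ ^ 2) '' Coupling n m) := by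
  refine ⟨0, fun x hx => ?_⟩
  rcases hx with ⟨T, hT, rfl⟩
  exact cost_nonneg X Y hT

/-- Weighted Minkowski inequality for finite sums. -/
lemma weighted_minkowski {ι : Type*} (s : Finset ι) (μ a b : ι → ℝ)
    (hμ : ∀ i ∈ s, 0 ≤ μ i) :
    Real.sqrt (∑ i ∈ s, μ i * (a i + b i) ^ 2) ≤
      Real.sqrt (∑ i ∈ s, μ i * a i ^ 2) + Real.sqrt (∑ i ∈ s, μ i * b i ^ 2) := by
  set A := ∑ i ∈ s, μ i * a i ^ 2 with hA_def
  set B := ∑ i ∈ s, μ i * b i ^ 2 with hB_def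
  have hA : 0 ≤ A := Finset.sum_nonneg fun i hi => mul_nonneg (hμ i hi) (sq_nonneg _)
  have hB : 0 ≤ B := Finset.sum_nonneg fun i hi => mul_nonneg (hμ i hi) (sq_nonneg _)
  have hcs : (∑ i ∈ s, μ i * (a i * b i)) ^ 2 ≤ A * B := by
    have h := Finset.sum_mul_sq_le_sq_mul_sq s
      (fun i => Real.sqrt (μ i) * a i) (fun i => Real.sqrt (μ i) * b i)
    have e1 : ∑ i ∈ s, (Real.sqrt (μ i) * a i) * (Real.sqrt (μ i) * b i)
        = ∑ i ∈ s, μ i * (a i * b i) := by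
      refine Finset.sum_congr rfl fun i hi => ?_
      rw [mul_mul_mul_comm, Real.mul_self_sqrt (hμ i hi)]
    have e2 : ∑ i ∈ s, (Real.sqrt (μ i) * a i) ^ 2 = A := by
      refine Finset.sum_congr rfl fun i hi => ?_
      rw [mul_pow, Real.sq_sqrt (hμ i hi)]
    have e3 : ∑ i ∈ s, (Real.sqrt (μ i) * b i) ^ 2 = B := by
      refine Finset.sum_congr rfl fun i hi => ?_
      rw [mul_pow, Real.sq_sqrt (hμ i hi)]
    rw [e1, e2, e3] at h
    exact h
  have hab : ∑ i ∈ s, μ i * (a i * b i) ≤ Real.sqrt A * Real.sqrt B := by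
    rw [← Real.sqrt_mul hA]
    calc ∑ i ∈ s, μ i * (a i * b i)
        ≤ |∑ i ∈ s, μ i * (a i * b i)| := le_abs_self _
      _ = Real.sqrt ((∑ i ∈ s, μ i * (a i * b i)) ^ 2) := (Real.sqrt_sq_eq_abs _).symm
      _ ≤ Real.sqrt (A * B) := Real.sqrt_le_sqrt hcs
  have hexp : ∑ i ∈ s, μ i * (a i + b i) ^ 2
      ≤ (Real.sqrt A + Real.sqrt B) ^ 2 := by
    have : ∑ i ∈ s, μ i * (a i + b i) ^ 2
        = A + B + 2 * ∑ i ∈ s, μ i * (a i * b i) := by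
      rw [hA_def, hB_def, ← Finset.sum_add_distrib, Finset.mul_sum, ← Finset.sum_add_distrib]
      exact Finset.sum_congr rfl fun i hi => by ring
    rw [this, add_sq, Real.sq_sqrt hA, Real.sq_sqrt hB]
    nlinarith
  calc Real.sqrt (∑ i ∈ s, μ i * (a i + b i) ^ 2)
      ≤ Real.sqrt ((Real.sqrt A + Real.sqrt B) ^ 2) := Real.sqrt_le_sqrt hexp
    _ = Real.sqrt A + Real.sqrt B := Real.sqrt_sq (by positivity)

theorem stmt_8 {n m p d : ℕ} (hn : 1 ≤ n) (hm : 1 ≤ m) (hp : 1 ≤ p)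
    (X : Fin n → EuclideanSpace ℝ (Fin d)) (Y : Fin m → EuclideanSpace ℝ (Fin d))
    (Z : Fin p → EuclideanSpace ℝ (Fin d)) :
    Real.sqrt (WL2 X Z) ≤ Real.sqrt (WL2 X Y) + Real.sqrt (WL2 Y Z) := by
  have hm0 : (m : ℝ) ≠ 0 := Nat.cast_ne_zero.2 (by omega)
  -- key inequality for fixed couplings
  have key : ∀ T1 ∈ Coupling n m, ∀ T2 ∈ Coupling m p,
      Real.sqrt (WL2 X Z) ≤
        Real.sqrt (∑ i, ∑ j, T1 i j * ‖X i - Y j‖ ^ 2) +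
        Real.sqrt (∑ j, ∑ k, T2 j k * ‖Y j - Z k‖ ^ 2) := by
    intro T1 hT1 T2 hT2
    -- glued coupling
    set T : Matrix (Fin n) (Fin p) ℝ :=
      fun i k => ∑ j, (m : ℝ) * T1 i j * T2 j k with hT_def
    have hT1nn := hT1.1
    have hT2nn := hT2.1
    have hTmem : T ∈ Coupling n p := by
      refine ⟨fun i k => Finset.sum_nonneg fun j _ => ?_, fun i => ?_, fun k => ?_⟩
      · exact mul_nonneg (mul_nonneg (Nat.cast_nonneg m) (hT1nn _ _)) (hT2nn _ _)
      · show ∑ k, ∑ j, (m : ℝ) * T1 i j * T2 j k = 1 / (n : ℝ)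
        rw [Finset.sum_comm]
        have h1 : ∀ j, ∑ k, (m : ℝ) * T1 i j * T2 j k = T1 i j := by
          intro j
          rw [← Finset.mul_sum, hT2.2.1 j]
          field_simp
        simp_rw [h1]
        exact hT1.2.1 i
      · show ∑ i, ∑ j, (m : ℝ) * T1 i j * T2 j k = 1 / (p : ℝ)
        rw [Finset.sum_comm]
        have h1 : ∀ j, ∑ i, (m : ℝ) * T1 i j * T2 j k = T2 j k := by
          intro j
          have e : ∀ i, (m : ℝ) * T1 i j * T2 j k = ((m : ℝ) * T2 j k) * T1 i j :=
            fun i => by ring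
          simp_rw [e]
          rw [← Finset.mul_sum, hT1.2.2 j]
          field_simp
        simp_rw [h1]
        exact hT2.2.2 k
    -- the glued cost as triple sum
    set μ : Fin n × Fin m × Fin p → ℝ :=
      fun q => (m : ℝ) * T1 q.1 q.2.1 * T2 q.2.1 q.2.2 with hμ_def
    have hμnn : ∀ q : Fin n × Fin m × Fin p, 0 ≤ μ q := by
      intro q
      have : 0 ≤ (m : ℝ) := Nat.cast_nonneg m
      exact mul_nonneg (mul_nonneg this (hT1nn _ _)) (hT2nn _ _)
    have hglue : ∑ i, ∑ k, T i k * ‖X i - Z k‖ ^ 2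
        = ∑ q : Fin n × Fin m × Fin p, μ q * ‖X q.1 - Z q.2.2‖ ^ 2 := by
      rw [Fintype.sum_prod_type]
      refine Finset.sum_congr rfl fun i _ => ?_
      simp_rw [Fintype.sum_prod_type]
      rw [Finset.sum_comm]
      refine Finset.sum_congr rfl fun k _ => ?_
      simp only [hμ_def, hT_def]
      rw [Finset.sum_mul]
    have hmarg1 : ∑ q : Fin n × Fin m × Fin p, μ q * ‖X q.1 - Y q.2.1‖ ^ 2
        = ∑ i, ∑ j, T1 i j * ‖X i - Y j‖ ^ 2 := by
      rw [Fintype.sum_prod_type]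
      refine Finset.sum_congr rfl fun i _ => ?_
      rw [Fintype.sum_prod_type]
      refine Finset.sum_congr rfl fun j _ => ?_
      have e : ∀ k, μ (i, j, k) * ‖X i - Y j‖ ^ 2
          = ((m : ℝ) * T1 i j * ‖X i - Y j‖ ^ 2) * T2 j k := by
        intro k
        simp only [hμ_def]
        ring
      simp_rw [e]
      rw [← Finset.mul_sum, hT2.2.1 j]
      field_simp
    have hmarg2 : ∑ q : Fin n × Fin m × Fin p, μ q * ‖Y q.2.1 - Z q.2.2‖ ^ 2
        = ∑ j, ∑ k, T2 j k * ‖Y j - Z k‖ ^ 2 := by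
      rw [Fintype.sum_prod_type]
      simp_rw [Fintype.sum_prod_type]
      rw [Finset.sum_comm]
      refine Finset.sum_congr rfl fun j _ => ?_
      rw [Finset.sum_comm]
      refine Finset.sum_congr rfl fun k _ => ?_
      have e : ∀ i, μ (i, j, k) * ‖Y j - Z k‖ ^ 2
          = ((m : ℝ) * T2 j k * ‖Y j - Z k‖ ^ 2) * T1 i j := by
        intro i
        simp only [hμ_def]
        ring
      simp_rw [e]
      rw [← Finset.mul_sum, hT1.2.2 j]
      field_simp
    -- pointwise triangle bound
    have hpt : ∑ q : Fin n × Fin m × Fin p, μ q * ‖X q.1 - Z q.2.2‖ ^ 2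
        ≤ ∑ q : Fin n × Fin m × Fin p,
            μ q * (‖X q.1 - Y q.2.1‖ + ‖Y q.2.1 - Z q.2.2‖) ^ 2 := by
      refine Finset.sum_le_sum fun q _ => ?_
      refine mul_le_mul_of_nonneg_left ?_ (hμnn q)
      have htri : ‖X q.1 - Z q.2.2‖ ≤ ‖X q.1 - Y q.2.1‖ + ‖Y q.2.1 - Z q.2.2‖ := by
        simpa [dist_eq_norm] using dist_triangle (X q.1) (Y q.2.1) (Z q.2.2)
      exact pow_le_pow_left₀ (norm_nonneg _) htri 2
    -- assemble
    have hW : WL2 X Z ≤ ∑ i, ∑ k, T i k * ‖X i - Z k‖ ^ 2 :=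
      csInf_le (cost_bddBelow X Z) ⟨T, hTmem, rfl⟩
    calc Real.sqrt (WL2 X Z)
        ≤ Real.sqrt (∑ q : Fin n × Fin m × Fin p,
            μ q * (‖X q.1 - Y q.2.1‖ + ‖Y q.2.1 - Z q.2.2‖) ^ 2) := by
          refine Real.sqrt_le_sqrt ?_
          rw [← hglue] at hpt
          exact hW.trans hpt
      _ ≤ Real.sqrt (∑ q : Fin n × Fin m × Fin p, μ q * ‖X q.1 - Y q.2.1‖ ^ 2) +
          Real.sqrt (∑ q : Fin n × Fin m × Fin p, μ q * ‖Y q.2.1 - Z q.2.2‖ ^ 2) :=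
          weighted_minkowski _ μ _ _ (fun q _ => hμnn q)
      _ = _ := by rw [hmarg1, hmarg2]
  -- epsilon argument
  have hne1 : ((fun T : Matrix (Fin n) (Fin m) ℝ =>
      ∑ i, ∑ j, T i j * ‖X i - Y j‖ ^ 2) '' Coupling n m).Nonempty :=
    (coupling_nonempty hn hm).image _
  have hne2 : ((fun T : Matrix (Fin m) (Fin p) ℝ =>
      ∑ i, ∑ j, T i j * ‖Y i - Z j‖ ^ 2) '' Coupling m p).Nonempty :=
    (coupling_nonempty hm hp).image _
  have heps : ∀ ε : ℝ, 0 < ε →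
      Real.sqrt (WL2 X Z) ≤ Real.sqrt (WL2 X Y + ε) + Real.sqrt (WL2 Y Z + ε) := by
    intro ε hε
    obtain ⟨c1, hc1mem, hc1⟩ := Real.lt_sInf_add_pos hne1 hε
    obtain ⟨c2, hc2mem, hc2⟩ := Real.lt_sInf_add_pos hne2 hε
    obtain ⟨T1, hT1, rfl⟩ := hc1mem
    obtain ⟨T2, hT2, rfl⟩ := hc2mem
    calc Real.sqrt (WL2 X Z)
        ≤ Real.sqrt (∑ i, ∑ j, T1 i j * ‖X i - Y j‖ ^ 2) +
          Real.sqrt (∑ j, ∑ k, T2 j k * ‖Y j - Z k‖ ^ 2) := key T1 hT1 T2 hT2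
      _ ≤ Real.sqrt (WL2 X Y + ε) + Real.sqrt (WL2 Y Z + ε) := by
          gcongr <;> [exact hc1.le; exact hc2.le]
  -- take the limit ε → 0⁺
  have hcont : Filter.Tendsto
      (fun ε : ℝ => Real.sqrt (WL2 X Y + ε) + Real.sqrt (WL2 Y Z + ε))
      (nhdsWithin 0 (Set.Ioi 0)) (nhds (Real.sqrt (WL2 X Y) + Real.sqrt (WL2 Y Z))) := by
    have : Filter.Tendsto
        (fun ε : ℝ => Real.sqrt (WL2 X Y + ε) + Real.sqrt (WL2 Y Z + ε))
        (nhds 0) (nhds (Real.sqrt (WL2 X Y + 0) + Real.sqrt (WL2 Y Z + 0))) := by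
      apply Filter.Tendsto.add <;>
        exact (Real.continuous_sqrt.comp (continuous_const.add continuous_id)).tendsto 0
    simpa using this.mono_left nhdsWithin_le_nhds
  exact ge_of_tendsto hcont (Filter.eventually_of_mem self_mem_nhdsWithin
    fun ε hε => heps ε hε)
end
end

section
/- (Theorem 2(i): W_dot is not positive definite.) There exist four point clouds X₁, X₂, X₃, X₄, each of size 2 in ℝ², and coefficients c ∈ ℝ⁴, such that Σ_{i,j=1}^4 c_i c_j W_dot(X_i, X_j) < 0. Hence the similarity kernel W_dot is not a positive definite kernel on point clouds. (One may take the points u₀=(0,0), u₁=(0,1), u₂=(1,0), u₃=(1,1) and X₁={u₀,u₁}, X₂={u₀,u₂}, X₃={u₀,u₃}, X₄={u₁,u₂}.) -/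
open scoped RealInnerProductSpace BigOperators

noncomputable section

lemma diag_mem_coupling :
    (![![(1:ℝ)/2, 0], ![0, 1/2]] : Matrix (Fin 2) (Fin 2) ℝ) ∈ Coupling 2 2 := by
  refine ⟨?_, ?_, ?_⟩
  · intro i j; fin_cases i <;> fin_cases j <;> norm_num
  · intro i; fin_cases i <;> simp [Fin.sum_univ_two]
  · intro j; fin_cases j <;> simp [Fin.sum_univ_two]

lemma anti_mem_coupling :
    (![![(0:ℝ), 1/2], ![1/2, 0]] : Matrix (Fin 2) (Fin 2) ℝ) ∈ Coupling 2 2 := by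
  refine ⟨?_, ?_, ?_⟩
  · intro i j; fin_cases i <;> fin_cases j <;> norm_num
  · intro i; fin_cases i <;> simp [Fin.sum_univ_two]
  · intro j; fin_cases j <;> simp [Fin.sum_univ_two]

lemma Wdot_two {d : ℕ} (x0 x1 y0 y1 : EuclideanSpace ℝ (Fin d)) :
    Wdot ![x0, x1] ![y0, y1]
      = max ((⟪x0, y0⟫ + ⟪x1, y1⟫) / 2) ((⟪x0, y1⟫ + ⟪x1, y0⟫) / 2) := by
  set M := max ((⟪x0, y0⟫ + ⟪x1, y1⟫) / 2) ((⟪x0, y1⟫ + ⟪x1, y0⟫) / 2) with hM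
  have hub : ∀ z ∈ ((fun T : Matrix (Fin 2) (Fin 2) ℝ =>
      ∑ i, ∑ j, T i j * ⟪(![x0, x1]) i, (![y0, y1]) j⟫) '' Coupling 2 2), z ≤ M := by
    rintro z ⟨T, ⟨hpos, hrow, hcol⟩, rfl⟩
    have h00 := hpos 0 0
    have h01 := hpos 0 1
    have hr0 := hrow 0
    have hc0 := hcol 0
    have hc1 := hcol 1
    simp only [Fin.sum_univ_two, Matrix.cons_val_zero, Matrix.cons_val_one,
      Matrix.head_cons] at hr0 hc0 hc1 ⊢
    have hM1 : (⟪x0, y0⟫ + ⟪x1, y1⟫) / 2 ≤ M := le_max_left _ _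
    have hM2 : (⟪x0, y1⟫ + ⟪x1, y0⟫) / 2 ≤ M := le_max_right _ _
    norm_num at hr0 hc0 hc1
    have e10 : T 1 0 = T 0 1 := by linarith
    have e11 : T 1 1 = T 0 0 := by linarith
    rw [e10, e11]
    have k1 : T 0 0 * (⟪x0, y0⟫ + ⟪x1, y1⟫) ≤ T 0 0 * (2 * M) :=
      mul_le_mul_of_nonneg_left (by linarith) h00
    have k2 : T 0 1 * (⟪x0, y1⟫ + ⟪x1, y0⟫) ≤ T 0 1 * (2 * M) :=
      mul_le_mul_of_nonneg_left (by linarith) h01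
    have k3 : T 0 0 * (2 * M) + T 0 1 * (2 * M) = M := by
      rw [← add_mul, hr0]; ring
    linarith [k1, k2, k3]
  have hne : ((fun T : Matrix (Fin 2) (Fin 2) ℝ =>
      ∑ i, ∑ j, T i j * ⟪(![x0, x1]) i, (![y0, y1]) j⟫) '' Coupling 2 2).Nonempty :=
    ⟨_, Set.mem_image_of_mem _ diag_mem_coupling⟩
  have hbdd : BddAbove ((fun T : Matrix (Fin 2) (Fin 2) ℝ =>
      ∑ i, ∑ j, T i j * ⟪(![x0, x1]) i, (![y0, y1]) j⟫) '' Coupling 2 2) := ⟨M, hub⟩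
  refine le_antisymm (csSup_le hne hub) ?_
  have hd : (⟪x0, y0⟫ + ⟪x1, y1⟫) / 2 ≤ Wdot ![x0, x1] ![y0, y1] := by
    have h := le_csSup hbdd (Set.mem_image_of_mem _ diag_mem_coupling)
    rw [Wdot]
    refine le_trans (le_of_eq ?_) h
    simp only [Fin.sum_univ_two, Matrix.cons_val_zero, Matrix.cons_val_one, Matrix.head_cons]
    ring
  have ha : (⟪x0, y1⟫ + ⟪x1, y0⟫) / 2 ≤ Wdot ![x0, x1] ![y0, y1] := by
    have h := le_csSup hbdd (Set.mem_image_of_mem _ anti_mem_coupling)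
    rw [Wdot]
    refine le_trans (le_of_eq ?_) h
    simp only [Fin.sum_univ_two, Matrix.cons_val_zero, Matrix.cons_val_one, Matrix.head_cons]
    ring
  exact max_le hd ha

lemma inner_euclid_two (x y : EuclideanSpace ℝ (Fin 2)) :
    ⟪x, y⟫ = x 0 * y 0 + x 1 * y 1 := by
  simp [PiLp.inner_apply, RCLike.inner_apply, Fin.sum_univ_two]; ring

theorem stmt_9 :
    ∃ (X : Fin 4 → (Fin 2 → EuclideanSpace ℝ (Fin 2))) (c : Fin 4 → ℝ),
      ∑ i, ∑ j, c i * c j * Wdot (X i) (X j) < 0 := by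
  set u0 : EuclideanSpace ℝ (Fin 2) := !₂[0, 0] with hu0
  set u1 : EuclideanSpace ℝ (Fin 2) := !₂[0, 1] with hu1
  set u2 : EuclideanSpace ℝ (Fin 2) := !₂[1, 0] with hu2
  set u3 : EuclideanSpace ℝ (Fin 2) := !₂[1, 1] with hu3
  refine ⟨![![u0, u1], ![u0, u2], ![u0, u3], ![u1, u2]], ![3, 3, -2, -2], ?_⟩
  simp only [Fin.sum_univ_four, Matrix.cons_val_zero, Matrix.cons_val_one, Matrix.head_cons,
    Matrix.cons_val_two, Matrix.tail_cons, Matrix.cons_val_three, Wdot_two, inner_euclid_two]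
  simp only [hu0, hu1, hu2, hu3, Matrix.cons_val_zero, Matrix.cons_val_one, Matrix.head_cons]
  norm_num
end
end

section
/- (Theorem 2(ii): W_L2 is not conditionally negative definite.) There exist N ∈ ℕ, point clouds X₁, …, X_N, each of size 2 in ℝ², and coefficients c ∈ ℝ^N with Σ_i c_i = 0, such that Σ_{i,j=1}^N c_i c_j W_L2(X_i, X_j) > 0. Hence the discrepancy kernel W_L2 is not conditionally negative definite on point clouds. -/
open scoped RealInnerProductSpace BigOperators

noncomputable section

def pt (a b : ℝ) : EuclideanSpace ℝ (Fin 2) := WithLp.toLp 2 ![a, b]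

lemma normsq (a b c d : ℝ) : ‖pt a b - pt c d‖ ^ 2 = (a - c) ^ 2 + (b - d) ^ 2 := by
  have h : pt a b - pt c d = pt (a - c) (b - d) := by
    ext i; fin_cases i <;> simp [pt]
  rw [h, pt, EuclideanSpace.norm_eq, Real.sq_sqrt (by positivity)]
  simp [Fin.sum_univ_two, Real.norm_eq_abs, sq_abs]

lemma WL2_two {d : ℕ} (X Y : Fin 2 → EuclideanSpace ℝ (Fin d)) :
    WL2 X Y = min (‖X 0 - Y 0‖ ^ 2 + ‖X 1 - Y 1‖ ^ 2)
      (‖X 0 - Y 1‖ ^ 2 + ‖X 1 - Y 0‖ ^ 2) / 2 := by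
  set s1 := ‖X 0 - Y 0‖ ^ 2 + ‖X 1 - Y 1‖ ^ 2 with hs1
  set s2 := ‖X 0 - Y 1‖ ^ 2 + ‖X 1 - Y 0‖ ^ 2 with hs2
  have hId : (!![(1:ℝ)/2, 0; 0, 1/2]) ∈ Coupling 2 2 := by
    refine ⟨?_, ?_, ?_⟩
    · intro i j; fin_cases i <;> fin_cases j <;> norm_num
    · intro i; fin_cases i <;> simp [Fin.sum_univ_two]
    · intro j; fin_cases j <;> simp [Fin.sum_univ_two]
  have hSw : (!![(0:ℝ), 1/2; 1/2, 0]) ∈ Coupling 2 2 := by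
    refine ⟨?_, ?_, ?_⟩
    · intro i j; fin_cases i <;> fin_cases j <;> norm_num
    · intro i; fin_cases i <;> simp [Fin.sum_univ_two]
    · intro j; fin_cases j <;> simp [Fin.sum_univ_two]
  have hmem1 : s1 / 2 ∈ ((fun T : Matrix (Fin 2) (Fin 2) ℝ =>
      ∑ i, ∑ j, T i j * ‖X i - Y j‖ ^ 2) '' Coupling 2 2) := by
    refine ⟨_, hId, ?_⟩
    simp [Fin.sum_univ_two, hs1]; ring
  have hmem2 : s2 / 2 ∈ ((fun T : Matrix (Fin 2) (Fin 2) ℝ =>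
      ∑ i, ∑ j, T i j * ‖X i - Y j‖ ^ 2) '' Coupling 2 2) := by
    refine ⟨_, hSw, ?_⟩
    simp [Fin.sum_univ_two, hs2]; ring
  have hlb : ∀ v ∈ ((fun T : Matrix (Fin 2) (Fin 2) ℝ =>
      ∑ i, ∑ j, T i j * ‖X i - Y j‖ ^ 2) '' Coupling 2 2), min s1 s2 / 2 ≤ v := by
    rintro v ⟨T, ⟨hpos, hrow, hcol⟩, rfl⟩
    have h00 := hpos 0 0
    have h01 := hpos 0 1
    have h10 := hpos 1 0
    have h11 := hpos 1 1
    have hr0 := hrow 0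
    have hr1 := hrow 1
    have hc0 := hcol 0
    simp only [Fin.sum_univ_two] at hr0 hr1 hc0 ⊢
    norm_num at hr0 hr1 hc0
    rcases le_total s1 s2 with h | h
    · rw [min_eq_left h]
      nlinarith [mul_nonneg h01 (sub_nonneg.2 h), mul_nonneg h10 (sub_nonneg.2 h),
        sq_nonneg (‖X 0 - Y 0‖), sq_nonneg (‖X 1 - Y 1‖)]
    · rw [min_eq_right h]
      nlinarith [mul_nonneg h00 (sub_nonneg.2 h), mul_nonneg h11 (sub_nonneg.2 h),
        sq_nonneg (‖X 0 - Y 1‖), sq_nonneg (‖X 1 - Y 0‖)]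
  have hbdd : BddBelow ((fun T : Matrix (Fin 2) (Fin 2) ℝ =>
      ∑ i, ∑ j, T i j * ‖X i - Y j‖ ^ 2) '' Coupling 2 2) := ⟨_, hlb⟩
  refine le_antisymm ?_ (le_csInf ⟨_, hmem1⟩ hlb)
  rcases le_total s1 s2 with h | h
  · rw [min_eq_left h]; exact csInf_le hbdd hmem1
  · rw [min_eq_right h]; exact csInf_le hbdd hmem2

theorem stmt_10 :
    ∃ (N : ℕ) (X : Fin N → (Fin 2 → EuclideanSpace ℝ (Fin 2))) (c : Fin N → ℝ),
      ∑ i, c i = 0 ∧ 0 < ∑ i, ∑ j, c i * c j * WL2 (X i) (X j) := by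
  refine ⟨4, ![![pt 0 (-1), pt 1 1], ![pt 1 (-1), pt 0 1],
      ![pt 1 1, pt (-1) 0], ![pt 1 0, pt (-1) 1]], ![-1, 1, 1, -1], ?_, ?_⟩
  · simp [Fin.sum_univ_four]
  · simp only [Fin.sum_univ_four, WL2_two, Matrix.cons_val_zero, Matrix.cons_val_one,
      Matrix.head_cons, Matrix.cons_val_two, Matrix.tail_cons, Matrix.cons_val_three,
      normsq]
    norm_num
end
end
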